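/- arXiv:2008.06045 — 7 statements merged into one kernel-verified Lean document; each statement's English description precedes it below -/
import Mathlib

section
/- Let G be a bipartite graph with parts X and Y, and let δ(Y) denote the minimum degree among vertices of Y. For a vertex y ∈ Y, define the 0-excess of y as max(0, max_{x ∈ N(y)} deg(x) − deg(y)) (and 0 if y has no neighbours). Then the sum over all y ∈ Y of the 0-excess of y is at least δ(Y)·(|Y| − |X|). -/
/-- The 0-excess of a vertex `y`: `max (0, max_{x ∈ N(y)} deg x − deg y)`,
taken to be `0` when `y` has no neighbours (computed with truncated subtraction). -/
def zeroExcess {V : Type*} [Fintype V] (G : SimpleGraph V) [DecidableRel G.Adj] (y : V) : ℕ :=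
  (G.neighborFinset y).sup (fun x => G.degree x) - G.degree y

/-- **0-excess sum lemma.** For a bipartite graph with parts `X, Y` and `δ` the minimum
degree among vertices of `Y`, we have `∑_{y ∈ Y} 0-ex(y) ≥ δ(Y)·(|Y| − |X|)`. -/
theorem zeroExcess_sum {V : Type*} [Fintype V] [DecidableEq V] (G : SimpleGraph V) [DecidableRel G.Adj]
    (X Y : Finset V) (hdisj : Disjoint X Y) (hcover : X ∪ Y = Finset.univ)
    (hbip : ∀ u v, G.Adj u v → (u ∈ X ∧ v ∈ Y) ∨ (u ∈ Y ∧ v ∈ X))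
    (hY : Y.Nonempty) :
    (Y.inf' hY (fun y => G.degree y) : ℤ) * ((Y.card : ℤ) - (X.card : ℤ)) ≤
      ∑ y ∈ Y, (zeroExcess G y : ℤ) := by
  set δ : ℕ := Y.inf' hY (fun y => G.degree y) with hδ
  have hsum_nonneg : (0:ℤ) ≤ ∑ y ∈ Y, (zeroExcess G y : ℤ) :=
    Finset.sum_nonneg fun y _ => by positivity
  have hinf : (Y.inf' hY fun y => (G.degree y : ℤ)) = (δ:ℤ) := by
    rw [hδ]
    exact (Finset.apply_inf'_eq_inf'_comp hY (fun n : ℕ => (n:ℤ))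
      (fun a b => by beta_reduce; norm_cast)).symm
  rw [hinf]
  rcases Nat.eq_zero_or_pos δ with h0 | hpos
  · rw [h0]; simpa using hsum_nonneg
  -- δ ≥ 1
  have hdy : ∀ y ∈ Y, δ ≤ G.degree y := fun y hy => Finset.inf'_le _ hy
  have hNy : ∀ y ∈ Y, G.neighborFinset y ⊆ X := by
    intro y hy x hx
    rw [SimpleGraph.mem_neighborFinset] at hx
    rcases hbip y x hx with ⟨hyX, _⟩ | ⟨_, hxX⟩
    · exact absurd hy (Finset.disjoint_left.mp hdisj hyX)
    · exact hxX
  -- key inequality over ℚ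
  have key : (δ:ℚ) * Y.card ≤ δ * X.card + ∑ y ∈ Y, (zeroExcess G y : ℚ) := by
    -- per-vertex inequality
    have pery : ∀ y ∈ Y, (δ:ℚ) ≤
        δ * (∑ x ∈ G.neighborFinset y, (1 / (G.degree x) : ℚ)) + (zeroExcess G y : ℚ) := by
      intro y hy
      have hd : δ ≤ G.degree y := hdy y hy
      have hdpos : 0 < G.degree y := lt_of_lt_of_le hpos hd
      have hne : (G.neighborFinset y).Nonempty := by
        rw [← Finset.card_pos, SimpleGraph.card_neighborFinset_eq_degree]
        exact hdpos
      set s : ℕ := (G.neighborFinset y).sup (fun x => G.degree x) with hs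
      have hdx1 : ∀ x ∈ G.neighborFinset y, 1 ≤ G.degree x := by
        intro x hx
        rw [SimpleGraph.mem_neighborFinset] at hx
        have hmem : y ∈ G.neighborFinset x := by
          rw [SimpleGraph.mem_neighborFinset]; exact hx.symm
        have hp' : 0 < (G.neighborFinset x).card := Finset.card_pos.mpr ⟨y, hmem⟩
        rwa [SimpleGraph.card_neighborFinset_eq_degree] at hp'
      have hdxs : ∀ x ∈ G.neighborFinset y, G.degree x ≤ s := fun x hx => Finset.le_sup (f := fun x => G.degree x) hx
      have hs1 : 1 ≤ s := by
        obtain ⟨x, hx⟩ := hne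
        exact le_trans (hdx1 x hx) (hdxs x hx)
      have hsQ : (0:ℚ) < s := by exact_mod_cast hs1
      -- harmonic sum bound
      have hharm : (G.degree y : ℚ) / s ≤ ∑ x ∈ G.neighborFinset y, (1 / (G.degree x) : ℚ) := by
        have : (G.degree y : ℚ) / s = ∑ x ∈ G.neighborFinset y, (1 / (s:ℚ)) := by
          rw [Finset.sum_const, SimpleGraph.card_neighborFinset_eq_degree, nsmul_eq_mul]
          ring
        rw [this]
        refine Finset.sum_le_sum fun x hx => ?_
        have h1 : (0:ℚ) < G.degree x := by exact_mod_cast hdx1 x hx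
        have h2 : (G.degree x : ℚ) ≤ s := by exact_mod_cast hdxs x hx
        exact one_div_le_one_div_of_le h1 h2
      -- core numeric inequality: δ * s ≤ δ * d(y) + zeroExcess * s
      have hC : (δ:ℚ) * s ≤ δ * G.degree y + (zeroExcess G y : ℚ) * s := by
        have hz : zeroExcess G y = s - G.degree y := rfl
        rcases le_or_gt (G.degree y) s with hle | hlt
        · have hcast : (zeroExcess G y : ℚ) = (s:ℚ) - G.degree y := by
            rw [hz]; push_cast [Nat.cast_sub hle]; ring
          have hδs : (δ:ℚ) ≤ s := by exact_mod_cast le_trans hd hle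
          have hds : (G.degree y : ℚ) ≤ s := by exact_mod_cast hle
          nlinarith
        · have hz0 : zeroExcess G y = 0 := by
            rw [hz]; omega
          rw [hz0]
          have : (s:ℚ) ≤ G.degree y := by exact_mod_cast hlt.le
          have hδ0 : (0:ℚ) ≤ δ := by positivity
          push_cast
          nlinarith
      -- divide by s
      have hstep : (δ:ℚ) ≤ δ * ((G.degree y : ℚ) / s) + (zeroExcess G y : ℚ) := by
        have h2 : (δ:ℚ) * s ≤ (δ * ((G.degree y : ℚ) / s) + (zeroExcess G y : ℚ)) * s := by
          have : (δ * ((G.degree y : ℚ) / s) + (zeroExcess G y : ℚ)) * s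
              = δ * G.degree y + (zeroExcess G y : ℚ) * s := by
            field_simp
          rw [this]; exact hC
        exact le_of_mul_le_mul_right h2 hsQ
      calc (δ:ℚ) ≤ δ * ((G.degree y : ℚ) / s) + (zeroExcess G y : ℚ) := hstep
        _ ≤ δ * (∑ x ∈ G.neighborFinset y, (1 / (G.degree x) : ℚ)) + (zeroExcess G y : ℚ) := by
            have hδ0 : (0:ℚ) ≤ δ := by positivity
            gcongr
    -- sum the per-vertex inequalities
    have hswap : ∑ y ∈ Y, ∑ x ∈ G.neighborFinset y, (1 / (G.degree x) : ℚ) ≤ X.card := by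
      have hrw : ∀ y ∈ Y, ∑ x ∈ G.neighborFinset y, (1 / (G.degree x) : ℚ)
          = ∑ x ∈ X, if G.Adj y x then (1 / (G.degree x) : ℚ) else 0 := by
        intro y hy
        have hfil : X.filter (fun x => G.Adj y x) = G.neighborFinset y := by
          ext x
          simp only [Finset.mem_filter, SimpleGraph.mem_neighborFinset]
          refine ⟨fun h => h.2, fun h => ⟨hNy y hy ?_, h⟩⟩
          rwa [SimpleGraph.mem_neighborFinset]
        rw [← hfil, Finset.sum_filter]
      have perx : ∀ x ∈ X, ∑ y ∈ Y, (if G.Adj y x then (1 / (G.degree x) : ℚ) else 0) ≤ 1 := by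
        intro x _
        rw [← Finset.sum_filter, Finset.sum_const, nsmul_eq_mul]
        have hsub : (Y.filter (fun y => G.Adj y x)) ⊆ G.neighborFinset x := by
          intro y hy
          rw [SimpleGraph.mem_neighborFinset]
          exact ((Finset.mem_filter.mp hy).2).symm
        have hcard : (Y.filter (fun y => G.Adj y x)).card ≤ G.degree x := by
          rw [← SimpleGraph.card_neighborFinset_eq_degree]
          exact Finset.card_le_card hsub
        rcases Nat.eq_zero_or_pos (G.degree x) with h0 | hp
        · have hc0 : (Y.filter (fun y => G.Adj y x)).card = 0 := by omega
          rw [hc0]; norm_num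
        · have h1 : (0:ℚ) < G.degree x := by exact_mod_cast hp
          rw [mul_one_div, div_le_one h1]
          exact_mod_cast hcard
      calc ∑ y ∈ Y, ∑ x ∈ G.neighborFinset y, (1 / (G.degree x) : ℚ)
          = ∑ y ∈ Y, ∑ x ∈ X, (if G.Adj y x then (1 / (G.degree x) : ℚ) else 0) :=
            Finset.sum_congr rfl hrw
        _ = ∑ x ∈ X, ∑ y ∈ Y, (if G.Adj y x then (1 / (G.degree x) : ℚ) else 0) :=
            Finset.sum_comm
        _ ≤ ∑ _x ∈ X, (1:ℚ) := Finset.sum_le_sum perx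
        _ = X.card := by simp
    calc (δ:ℚ) * Y.card = ∑ _y ∈ Y, (δ:ℚ) := by
          rw [Finset.sum_const, nsmul_eq_mul]; ring
      _ ≤ ∑ y ∈ Y, (δ * (∑ x ∈ G.neighborFinset y, (1 / (G.degree x) : ℚ)) + (zeroExcess G y : ℚ)) :=
          Finset.sum_le_sum pery
      _ = δ * (∑ y ∈ Y, ∑ x ∈ G.neighborFinset y, (1 / (G.degree x) : ℚ))
            + ∑ y ∈ Y, (zeroExcess G y : ℚ) := by
          rw [Finset.sum_add_distrib, Finset.mul_sum]
      _ ≤ δ * X.card + ∑ y ∈ Y, (zeroExcess G y : ℚ) := by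
          have hδ0 : (0:ℚ) ≤ δ := by positivity
          gcongr
  -- transfer back to ℤ
  have keyZ : (δ:ℤ) * Y.card ≤ δ * X.card + ∑ y ∈ Y, (zeroExcess G y : ℤ) := by
    exact_mod_cast key
  linarith
end

section
/- Let G be a bipartite graph with parts X, Y and let Y' ⊆ Y with δ(Y') the minimum degree in G among vertices of Y'. For y ∈ Y, define the k-excess of y as max(0, d(x_k) − d(y)), where x_k is the k-th largest-degree neighbour of y (and 0 if y has fewer than k neighbours). Then ∑_{y ∈ Y'} k-excess(y) ≥ δ(Y')·(|Y'| − |X|) − 2k·|Y'|. -/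
/-- The `k`-th largest element of a multiset of naturals (`k ≥ 1`),
or `0` if the multiset has fewer than `k` elements. -/
def kthLargest (s : Multiset ℕ) (k : ℕ) : ℕ :=
  ((s.sort (· ≤ ·)).reverse.getD (k - 1) 0)

/-- The `k`-excess of a vertex `y`: `max (0, d(x_k) − d(y))` where `x_k` is the
`k`-th largest-degree neighbour of `y`, taken to be `0` if `y` has fewer than `k`
neighbours (computed with truncated subtraction). -/
def kExcess {V : Type*} [Fintype V] (G : SimpleGraph V) [DecidableRel G.Adj]
    (k : ℕ) (y : V) : ℕ :=
  kthLargest ((G.neighborFinset y).val.map (fun x => G.degree x)) k - G.degree y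


private lemma countP_le_of_sorted (l : List ℕ) (k : ℕ) (hk : 0 < k) (hs : l.Pairwise (· ≤ ·))
    (v : ℕ) (hv : v = l.reverse.getD (k - 1) 0) :
    l.countP (fun a => v < a) ≤ k - 1 := by
  by_cases hN : l.length < k
  · calc l.countP (fun a => v < a) ≤ l.length := List.countP_le_length
      _ ≤ k - 1 := by omega
  · push_neg at hN
    have hidx : k - 1 < l.reverse.length := by
      rw [List.length_reverse]; omega
    have hNk : l.length - k < l.length := by omega
    have hv' : v = l[l.length - k]'hNk := by
      rw [hv, List.getD_eq_getElem l.reverse 0 hidx, List.getElem_reverse]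
      congr 1
      omega
    have hsplit : l.countP (fun a => v < a) =
        (l.take (l.length - k + 1)).countP (fun a => v < a) +
        (l.drop (l.length - k + 1)).countP (fun a => v < a) := by
      conv_lhs => rw [← List.take_append_drop (l.length - k + 1) l]
      rw [List.countP_append]
    have h1 : (l.take (l.length - k + 1)).countP (fun a => v < a) = 0 := by
      rw [List.countP_eq_zero]
      intro a ha
      obtain ⟨i, hi, rfl⟩ := List.getElem_of_mem ha
      rw [List.getElem_take] at *
      have hi' : i < l.length := by
        have := hi; rw [List.length_take] at this; omega
      have hile : i ≤ l.length - k := by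
        have := hi; rw [List.length_take] at this; omega
      have hle : l[i]'hi' ≤ l[l.length - k]'hNk := by
        rcases eq_or_lt_of_le hile with h | h
        · subst h; exact le_refl _
        · exact hs.rel_get_of_lt (by simpa using h)
      simp only [decide_eq_true_eq]
      rw [hv']
      omega
    have h2 : (l.drop (l.length - k + 1)).countP (fun a => v < a) ≤ k - 1 := by
      calc (l.drop (l.length - k + 1)).countP (fun a => v < a)
          ≤ (l.drop (l.length - k + 1)).length := List.countP_le_length
        _ ≤ k - 1 := by rw [List.length_drop]; omega
    omega

lemma multiset_card_filter_kth (s : Multiset ℕ) (k : ℕ) (hk : 0 < k) :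
    (Multiset.filter (fun a => kthLargest s k < a) s).card ≤ k - 1 := by
  set v := kthLargest s k with hv
  have h := countP_le_of_sorted (s.sort (· ≤ ·)) k hk (s.pairwise_sort _) v hv
  calc (Multiset.filter (fun a => v < a) s).card
      = Multiset.countP (fun a => v < a) s := (Multiset.countP_eq_card_filter _ _).symm
    _ = Multiset.countP (fun a => v < a) ((s.sort (· ≤ ·) : List ℕ) : Multiset ℕ) := by
        rw [Multiset.sort_eq]
    _ = (s.sort (· ≤ ·)).countP (fun a => v < a) := Multiset.coe_countP _ _
    _ ≤ k - 1 := h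

lemma finset_card_filter_kth {V : Type*} [DecidableEq V] (t : Finset V) (f : V → ℕ)
    (k : ℕ) (hk : 0 < k) :
    (t.filter (fun x => kthLargest (t.val.map f) k < f x)).card ≤ k - 1 := by
  have h := multiset_card_filter_kth (t.val.map f) k hk
  rw [Multiset.filter_map, Multiset.card_map] at h
  calc (t.filter (fun x => kthLargest (t.val.map f) k < f x)).card
      = (Multiset.filter ((fun a => kthLargest (t.val.map f) k < a) ∘ f) t.val).card := rfl
    _ ≤ k - 1 := h

-- W monotonicity
private lemma W_mono (δ : ℕ) {a b : ℕ} (hab : a ≤ b) :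
    ((a - δ : ℕ) : ℚ) / a ≤ ((b - δ : ℕ) : ℚ) / b := by
  rcases Nat.eq_zero_or_pos a with rfl | ha
  · simp only [Nat.cast_zero, div_zero]
    positivity
  have hb : 0 < b := lt_of_lt_of_le ha hab
  rw [div_le_div_iff₀ (by positivity) (by positivity)]
  by_cases hδ : δ ≤ a
  · rw [Nat.cast_sub hδ, Nat.cast_sub (hδ.trans hab)]
    have h1 : (δ : ℚ) * a ≤ (δ : ℚ) * b := by
      apply mul_le_mul_of_nonneg_left (by exact_mod_cast hab) (by positivity)
    nlinarith
  · push_neg at hδ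
    rw [Nat.sub_eq_zero_of_le hδ.le]
    simp only [Nat.cast_zero, zero_mul]
    positivity

private lemma W_le_one (δ a : ℕ) : ((a - δ : ℕ) : ℚ) / a ≤ 1 := by
  rcases Nat.eq_zero_or_pos a with rfl | ha
  · simp
  rw [div_le_one (by positivity)]
  exact_mod_cast Nat.sub_le a δ

private lemma W_nonneg (δ a : ℕ) : (0:ℚ) ≤ ((a - δ : ℕ) : ℚ) / a := by positivity

open Finset in
/-- **k-excess sum lemma.** For a bipartite graph with parts `X, Y`, a subset `Y' ⊆ Y`
and `δ(Y')` the minimum degree among vertices of `Y'`: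
`∑_{y ∈ Y'} k-ex(y) ≥ δ(Y')·(|Y'| − |X|) − 2k·|Y'|`. -/
theorem kExcess_sum {V : Type*} [Fintype V] [DecidableEq V]
    (G : SimpleGraph V) [DecidableRel G.Adj] (k : ℕ) (hk : 0 < k)
    (X Y : Finset V) (hdisj : Disjoint X Y) (hcover : X ∪ Y = Finset.univ)
    (hbip : ∀ u v, G.Adj u v → (u ∈ X ∧ v ∈ Y) ∨ (u ∈ Y ∧ v ∈ X))
    (Y' : Finset V) (hY' : Y' ⊆ Y) (hne : Y'.Nonempty) :
    (Y'.inf' hne (fun y => G.degree y) : ℤ) * ((Y'.card : ℤ) - (X.card : ℤ))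
        - 2 * (k : ℤ) * (Y'.card : ℤ) ≤
      ∑ y ∈ Y', (kExcess G k y : ℤ) := by
  classical
  set δ : ℕ := Y'.inf' hne (fun y => G.degree y) with hδ
  set W : V → ℚ := fun x => ((G.degree x - δ : ℕ) : ℚ) / (G.degree x : ℚ) with hWdef
  set nn : V → ℕ := fun x => (Y'.filter (fun y => G.Adj y x)).card with hnn
  have hW0 : ∀ x, 0 ≤ W x := fun x => by rw [hWdef]; positivity
  -- neighbours of y ∈ Y' lie in X
  have hNX : ∀ y ∈ Y', ∀ x, G.Adj y x → x ∈ X := by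
    intro y hy x hadj
    rcases hbip y x hadj with ⟨hyX, _⟩ | ⟨_, hxX⟩
    · exact absurd (hY' hy) (Finset.disjoint_left.mp hdisj hyX)
    · exact hxX
  have hfil : ∀ y ∈ Y', X.filter (fun x => G.Adj y x) = G.neighborFinset y := by
    intro y hy
    ext x
    simp only [mem_filter, SimpleGraph.mem_neighborFinset]
    exact ⟨fun h => h.2, fun h => ⟨hNX y hy x h, h⟩⟩
  -- swap lemma
  have hswap : ∀ f : V → ℚ,
      ∑ y ∈ Y', ∑ x ∈ G.neighborFinset y, f x = ∑ x ∈ X, (nn x : ℚ) * f x := by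
    intro f
    have h1 : ∀ y ∈ Y', ∑ x ∈ G.neighborFinset y, f x
        = ∑ x ∈ X, if G.Adj y x then f x else 0 := by
      intro y hy
      rw [← hfil y hy, Finset.sum_filter]
    rw [Finset.sum_congr rfl h1, Finset.sum_comm]
    apply Finset.sum_congr rfl
    intro x _
    rw [← Finset.sum_filter, hnn]
    simp [Finset.sum_const, nsmul_eq_mul]
  -- n(x) ≤ d(x)
  have hnd : ∀ x, nn x ≤ G.degree x := by
    intro x
    rw [hnn]
    apply le_trans (Finset.card_le_card ?_) (le_of_eq rfl)
    intro y hy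
    rw [SimpleGraph.mem_neighborFinset]
    exact ((Finset.mem_filter.mp hy).2).symm
  -- per-x inequality
  have hperx : ∀ x ∈ X, (nn x : ℚ) - δ ≤ (nn x : ℚ) * W x := by
    intro x _
    rcases Nat.eq_zero_or_pos (G.degree x) with h0 | hpos
    · have : nn x = 0 := le_antisymm (h0 ▸ hnd x) (Nat.zero_le _)
      rw [this]
      simp only [Nat.cast_zero, zero_sub, zero_mul]
      simp [neg_nonpos]
    · rw [hWdef]
      have hdx : (0:ℚ) < (G.degree x : ℚ) := by exact_mod_cast hpos
      rw [mul_div_assoc']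
      rw [le_div_iff₀ hdx]
      by_cases hδx : δ ≤ G.degree x
      · rw [Nat.cast_sub hδx]
        have h1 : (nn x : ℚ) ≤ (G.degree x : ℚ) := by exact_mod_cast hnd x
        have h2 : (0:ℚ) ≤ (δ : ℚ) := by positivity
        nlinarith
      · push_neg at hδx
        rw [Nat.sub_eq_zero_of_le hδx.le]
        have h1 : (nn x : ℚ) ≤ (δ : ℚ) := by
          exact_mod_cast (hnd x).trans hδx.le
        have h2 : (0:ℚ) ≤ (G.degree x : ℚ) := by positivity
        nlinarith
  -- per-y inequality
  have hpery : ∀ y ∈ Y', ∑ x ∈ G.neighborFinset y, W x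
      ≤ (kExcess G k y : ℚ) + ((G.degree y - δ : ℕ) : ℚ) + 2 * k := by
    intro y hy
    have hδy : δ ≤ G.degree y := Finset.inf'_le _ hy
    set t := G.neighborFinset y with ht
    set K := kthLargest (t.val.map (fun x => G.degree x)) k with hKdef
    have hKe : kExcess G k y = K - G.degree y := rfl
    set D := G.degree y + kExcess G k y with hD
    have hKD : K ≤ D := by omega
    have hdyD : G.degree y ≤ D := by omega
    rw [← Finset.sum_filter_add_sum_filter_not t (fun x => K < G.degree x)]
    have hb1 : ∑ x ∈ t.filter (fun x => K < G.degree x), W x ≤ ((k - 1 : ℕ) : ℚ) := by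
      calc ∑ x ∈ t.filter (fun x => K < G.degree x), W x
          ≤ (t.filter (fun x => K < G.degree x)).card • (1:ℚ) :=
            Finset.sum_le_card_nsmul _ _ _ (fun x _ => W_le_one δ _)
        _ = ((t.filter (fun x => K < G.degree x)).card : ℚ) := by simp
        _ ≤ ((k - 1 : ℕ) : ℚ) := by
            exact_mod_cast finset_card_filter_kth t (fun x => G.degree x) k hk
    have hb2 : ∑ x ∈ t.filter (fun x => ¬ K < G.degree x), W x ≤ ((D - δ : ℕ) : ℚ) := by
      have hq0 : (0:ℚ) ≤ ((D - δ : ℕ) : ℚ) / (D : ℚ) := by positivity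
      calc ∑ x ∈ t.filter (fun x => ¬ K < G.degree x), W x
          ≤ (t.filter (fun x => ¬ K < G.degree x)).card • (((D - δ : ℕ) : ℚ) / (D : ℚ)) := by
            apply Finset.sum_le_card_nsmul
            intro x hx
            have hxK : G.degree x ≤ K := le_of_not_gt (Finset.mem_filter.mp hx).2
            exact W_mono δ (hxK.trans hKD)
        _ = ((t.filter (fun x => ¬ K < G.degree x)).card : ℚ) * (((D - δ : ℕ) : ℚ) / (D : ℚ)) := by
            rw [nsmul_eq_mul]
        _ ≤ (D : ℚ) * (((D - δ : ℕ) : ℚ) / (D : ℚ)) := by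
            apply mul_le_mul_of_nonneg_right _ hq0
            have h1 : (t.filter (fun x => ¬ K < G.degree x)).card ≤ D :=
              le_trans (le_trans (Finset.card_filter_le _ _) (le_of_eq rfl)) hdyD
            exact_mod_cast h1
        _ ≤ ((D - δ : ℕ) : ℚ) := by
            rcases Nat.eq_zero_or_pos D with h0 | hpos
            · rw [h0]; simp
            · have : (D:ℚ) ≠ 0 := by positivity
              rw [mul_div_cancel₀ _ this]
    calc ∑ x ∈ t.filter (fun x => K < G.degree x), W x
          + ∑ x ∈ t.filter (fun x => ¬ K < G.degree x), W x
        ≤ ((k - 1 : ℕ) : ℚ) + ((D - δ : ℕ) : ℚ) := add_le_add hb1 hb2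
      _ ≤ (kExcess G k y : ℚ) + ((G.degree y - δ : ℕ) : ℚ) + 2 * k := by
          have : (k - 1 : ℕ) + (D - δ : ℕ) ≤ kExcess G k y + (G.degree y - δ : ℕ) + 2 * k := by
            omega
          exact_mod_cast this
  -- assembly
  have hEq : ∑ x ∈ X, (nn x : ℚ) = ∑ y ∈ Y', (G.degree y : ℚ) := by
    have h := hswap (fun _ => (1:ℚ))
    simp only [mul_one] at h
    rw [← h]
    apply Finset.sum_congr rfl
    intro y _
    rw [Finset.sum_const, nsmul_eq_mul, mul_one, SimpleGraph.card_neighborFinset_eq_degree]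
  have hchain : ∑ x ∈ X, ((nn x : ℚ) - δ)
      ≤ ∑ y ∈ Y', ((kExcess G k y : ℚ) + ((G.degree y - δ : ℕ) : ℚ) + 2 * k) := by
    calc ∑ x ∈ X, ((nn x : ℚ) - δ) ≤ ∑ x ∈ X, (nn x : ℚ) * W x :=
          Finset.sum_le_sum hperx
      _ = ∑ y ∈ Y', ∑ x ∈ G.neighborFinset y, W x := (hswap W).symm
      _ ≤ _ := Finset.sum_le_sum hpery
  have hsub : ∀ y ∈ Y', ((G.degree y - δ : ℕ) : ℚ) = (G.degree y : ℚ) - (δ : ℚ) := by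
    intro y hy
    exact Nat.cast_sub (Finset.inf'_le _ hy)
  rw [Finset.sum_sub_distrib, Finset.sum_const, hEq] at hchain
  rw [Finset.sum_add_distrib, Finset.sum_add_distrib, Finset.sum_congr rfl hsub,
    Finset.sum_sub_distrib, Finset.sum_const, Finset.sum_const] at hchain
  have hgoal : (δ : ℚ) * ((Y'.card : ℚ) - (X.card : ℚ)) - 2 * (k : ℚ) * (Y'.card : ℚ)
      ≤ ∑ y ∈ Y', (kExcess G k y : ℚ) := by
    simp only [nsmul_eq_mul, smul_eq_mul] at hchain
    linarith
  have hcast : ∑ y ∈ Y', (kExcess G k y : ℚ)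
      = (((∑ y ∈ Y', (kExcess G k y : ℤ)) : ℤ) : ℚ) := by
    push_cast
    rfl
  rw [hcast] at hgoal
  exact_mod_cast hgoal
end

section
/- Let M be a coloured matroid, I a rainbow independent set, and e an element not in I such that I ∪ {e} is rainbow and independent. Let R be a rainbow independent set with I ⊆ R. Then there exist at most two elements f₁, f₂ ∈ R \ I such that (R \ {f₁, f₂}) ∪ {e} is a rainbow independent set. -/
open Set

/-- A colouring of a matroid in which every colour class is independent. -/
def IsColouring {α β : Type*} (M : Matroid α) (κ : α → β) : Prop :=
  ∀ b : β, M.Indep {x ∈ M.E | κ x = b}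

/-- A rainbow independent set: independent, with pairwise distinct colours. -/
def RainbowIndep {α β : Type*} (M : Matroid α) (κ : α → β) (I : Set α) : Prop :=
  M.Indep I ∧ Set.InjOn κ I

/-- If `I ∪ {e}` is a rainbow independent set and `I ⊆ R` with `R` rainbow independent,
then at most two elements `f₁, f₂` of `R \ I` can be removed so that
`(R \ {f₁, f₂}) ∪ {e}` is a rainbow independent set. -/
theorem remove_two_insert_one {α β : Type*} (M : Matroid α) [M.Finite] (κ : α → β)
    (hκ : IsColouring M κ) (I R : Set α)
    (hI : RainbowIndep M κ I) (hR : RainbowIndep M κ R) (hIR : I ⊆ R)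
    (e : α) (he : e ∉ I) (heI : RainbowIndep M κ (insert e I)) :
    ∃ F ⊆ R \ I, F.ncard ≤ 2 ∧ RainbowIndep M κ (insert e (R \ F)) := by
  obtain ⟨hRi, hRinj⟩ := hR
  obtain ⟨heIi, heIinj⟩ := heI
  have heE : e ∈ M.E := heIi.subset_ground (mem_insert _ _)
  by_cases heR : e ∈ R
  · exact ⟨∅, empty_subset _, by simp, by
      rw [diff_empty, insert_eq_self.2 heR]; exact ⟨hRi, hRinj⟩⟩
  -- e ∉ R
  set S : Set α := {x ∈ R | κ x = κ e} with hSdef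
  have hSI : ∀ x ∈ S, x ∉ I := by
    intro x hx hxI
    have hxe : x ≠ e := fun h => heR (h ▸ hx.1)
    exact hxe (heIinj (mem_insert_of_mem _ hxI) (mem_insert _ _) hx.2)
  set R₁ : Set α := R \ S with hR₁def
  have hIR₁ : I ⊆ R₁ := fun x hx => ⟨hIR hx, fun hxS => hSI x hxS hx⟩
  have hR₁i : M.Indep R₁ := hRi.subset diff_subset
  have heR₁ : e ∉ R₁ := fun h => heR h.1
  set X : Set α := insert e R₁ with hXdef
  have hXE : X ⊆ M.E := insert_subset heE ((diff_subset.trans hRi.subset_ground))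
  have hXinj : InjOn κ X := by
    intro x hx y hy hxy
    rcases hx with rfl | hx <;> rcases hy with rfl | hy
    · rfl
    · exact absurd ⟨hy.1, hxy.symm⟩ hy.2
    · exact absurd ⟨hx.1, hxy⟩ hx.2
    · exact hRinj hx.1 hy.1 hxy
  obtain ⟨B, hB, hIB⟩ := (heIi : M.Indep (insert e I)).subset_isBasis_of_subset
    (insert_subset_insert hIR₁ : insert e I ⊆ X) hXE
  obtain ⟨B', hB', hR₁B'⟩ := hR₁i.subset_isBasis_of_subset (subset_insert e R₁) hXE
  have heB : e ∈ B := hIB (mem_insert _ _)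
  have hBX : B ⊆ X := hB.subset
  have hXfin : X.Finite := M.set_finite X hXE
  have hcard : R₁.encard ≤ B.encard := by
    rw [← hB'.encard_eq_encard hB]
    exact encard_le_encard hR₁B'
  have hXcard : X.encard = R₁.encard + 1 := encard_insert_of_notMem heR₁
  have hdiff : (X \ B).encard ≤ 1 := by
    have h1 : (X \ B).encard + B.encard = X.encard :=
      encard_diff_add_encard_of_subset hBX
    have hR₁fin : R₁.encard ≠ ⊤ := (hXfin.subset (subset_insert _ _)).encard_lt_top.ne
    have h2 : (X \ B).encard + R₁.encard ≤ 1 + R₁.encard := by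
      calc (X \ B).encard + R₁.encard ≤ (X \ B).encard + B.encard :=
            add_le_add_right hcard _
        _ = X.encard := h1
        _ = R₁.encard + 1 := hXcard
        _ = 1 + R₁.encard := add_comm _ _
    exact (WithTop.add_le_add_iff_right hR₁fin).1 h2
  refine ⟨S ∪ (X \ B), ?_, ?_, ?_⟩
  · rintro x (hx | hx)
    · exact ⟨hx.1, hSI x hx⟩
    · have hxR₁ : x ∈ R₁ := by
        rcases hx.1 with rfl | h
        · exact absurd heB hx.2
        · exact h
      exact ⟨hxR₁.1, fun hxI => hx.2 (hIB (mem_insert_of_mem _ hxI))⟩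
  · have hSenc : S.encard ≤ 1 := by
      rw [encard_le_one_iff]
      intro a b ha hb
      exact hRinj ha.1 hb.1 (ha.2.trans hb.2.symm)
    have hS1 : S.ncard ≤ 1 := by
      rw [ncard_def]
      exact le_trans (ENat.toNat_le_toNat hSenc (by simp)) (by simp)
    have hD1 : (X \ B).ncard ≤ 1 := by
      rw [ncard_def]
      exact le_trans (ENat.toNat_le_toNat hdiff (by simp)) (by simp)
    calc (S ∪ (X \ B)).ncard ≤ S.ncard + (X \ B).ncard := ncard_union_le _ _
      _ ≤ 1 + 1 := add_le_add hS1 hD1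
      _ = 2 := rfl
  · have hBeq : insert e (R \ (S ∪ (X \ B))) = B := by
      ext x
      simp only [mem_insert_iff, mem_diff, mem_union, not_or, not_and, not_not]
      constructor
      · rintro (rfl | ⟨hxR, hxS, hXB⟩)
        · exact heB
        · exact hXB (mem_insert_of_mem _ ⟨hxR, hxS⟩)
      · intro hxB
        by_cases hxe : x = e
        · exact Or.inl hxe
        · have hxX : x ∈ X := hBX hxB
          have hxR₁ : x ∈ R₁ := hxX.resolve_left hxe
          exact Or.inr ⟨hxR₁.1, hxR₁.2, fun _ => hxB⟩
    rw [hBeq]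
    exact ⟨hB.indep, hXinj.mono hBX⟩
end

section
/- Reduction is monotone: let 𝒯 = {T₁,…,T_m} and 𝒯̂ = {T̂₁,…,T̂_m} be families of disjoint rainbow independent sets in a coloured matroid with T̂ᵢ ⊆ Tᵢ for all i. Then for every r ≥ 0 and ℓ ≥ 1, the r-fold ℓ-reduced family of 𝒯̂ is a subfamily of the r-fold ℓ-reduced family of 𝒯, i.e. (𝒯̂)_ℓ^{(r)} ⊆ 𝒯_ℓ^{(r)} componentwise. -/
open Set

/-- A family of pairwise-disjoint rainbow independent sets. -/
def RainbowFamily {α β : Type*} (M : Matroid α) (κ : α → β) {m : ℕ}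
    (T : Fin m → Set α) : Prop :=
  (∀ i, RainbowIndep M κ (T i)) ∧ Pairwise (Function.onFun Disjoint T)

/-- The `ℓ`-reduction of a family: delete every element `e` for which at least `ℓ`
members `T j` (not already containing `e`) have `T j ∪ {e}` a rainbow independent set. -/
def reduceFam {α β : Type*} (M : Matroid α) (κ : α → β) (ℓ : ℕ) {m : ℕ}
    (T : Fin m → Set α) : Fin m → Set α :=
  fun i => {e ∈ T i |
    {j : Fin m | e ∉ T j ∧ RainbowIndep M κ (insert e (T j))}.ncard < ℓ}

/-- The `r`-fold iterated `ℓ`-reduction of a family. -/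
def reduceIter {α β : Type*} (M : Matroid α) (κ : α → β) (ℓ : ℕ) {m : ℕ}
    (r : ℕ) (T : Fin m → Set α) : Fin m → Set α :=
  (fun S => reduceFam M κ ℓ S)^[r] T

lemma reduceFam_mono {α β : Type*} (M : Matroid α) (κ : α → β) (ℓ : ℕ) {m : ℕ}
    (T That : Fin m → Set α) (hsub : ∀ i, That i ⊆ T i) :
    ∀ i, reduceFam M κ ℓ That i ⊆ reduceFam M κ ℓ T i := by
  intro i e he
  obtain ⟨heT, hcount⟩ := he
  refine ⟨hsub i heT, lt_of_le_of_lt ?_ hcount⟩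
  apply Set.ncard_le_ncard
  · intro j hj
    obtain ⟨hnot, hind, hinj⟩ := hj
    refine ⟨fun h => hnot (hsub j h), ?_, ?_⟩
    · exact hind.subset (insert_subset_insert (hsub j))
    · exact hinj.mono (insert_subset_insert (hsub j))
  · exact Set.toFinite _

/-- **Monotonicity of reduction.** If `T̂ᵢ ⊆ Tᵢ` componentwise for two families of
pairwise-disjoint rainbow independent sets, then the iterated reduced families satisfy
`(T̂)_ℓ^{(r)} ⊆ T_ℓ^{(r)}` componentwise. -/
theorem reduceIter_mono {α β : Type*} (M : Matroid α) [M.Finite] (κ : α → β)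
    (hκ : IsColouring M κ) {m : ℕ} (T That : Fin m → Set α)
    (hT : RainbowFamily M κ T) (hThat : RainbowFamily M κ That)
    (hsub : ∀ i, That i ⊆ T i) (r ℓ : ℕ) (hℓ : 1 ≤ ℓ) :
    ∀ i, reduceIter M κ ℓ r That i ⊆ reduceIter M κ ℓ r T i := by
  induction r with
  | zero => exact hsub
  | succ n ih =>
    intro i
    simp only [reduceIter, Function.iterate_succ_apply'] at *;
    exact reduceFam_mono M κ ℓ _ _ ih i
end

section
/- Let M be a coloured matroid and 𝒯 a family of pairwise-disjoint rainbow independent sets. Suppose there exist T ∈ 𝒯'_3 (the 3-reduced family of 𝒯) and an element e ∉ E(𝒯) such that T ∪ {e} is a rainbow independent set. Then 𝒯 is not maximum, i.e. there is a family of pairwise-disjoint rainbow independent sets in M with strictly more elements in total than 𝒯. -/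
open Set

section Aux

variable {α β : Type*} {M : Matroid α} {κ : α → β} {m : ℕ}

/-- Adding a new element `x` to the `j`-th member of a rainbow family. -/
lemma update_rainbow {S : Fin m → Set α} (hS : RainbowFamily M κ S) (j : Fin m) (x : α)
    (hx : ∀ i, x ∉ S i) (hrb : RainbowIndep M κ (insert x (S j))) :
    RainbowFamily M κ (Function.update S j (insert x (S j))) ∧
      (⋃ i, Function.update S j (insert x (S j)) i) = insert x (⋃ i, S i) := by
  classical
  refine ⟨⟨fun i => ?_, fun i i' hii' => ?_⟩, ?_⟩
  · rcases eq_or_ne i j with rfl | hij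
    · simpa using hrb
    · simpa [Function.update_of_ne hij] using hS.1 i
  · have hd := hS.2
    show Disjoint (Function.update S j (insert x (S j)) i) (Function.update S j (insert x (S j)) i')
    rcases eq_or_ne i j with rfl | hij
    · rw [Function.update_self, Function.update_of_ne (Ne.symm hii')]
      rw [Set.disjoint_left]
      rintro y (rfl | hy) hy'
      · exact hx i' hy'
      · exact Set.disjoint_left.1 (hd hii') hy hy'
    · rcases eq_or_ne i' j with rfl | hij'
      · rw [Function.update_of_ne hij, Function.update_self]
        rw [Set.disjoint_right]
        rintro y (rfl | hy) hy'
        · exact hx i hy'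
        · exact Set.disjoint_right.1 (hd hii') hy hy'
      · rw [Function.update_of_ne hij, Function.update_of_ne hij']
        exact hd hii'
  · ext y
    simp only [mem_iUnion, mem_insert_iff]
    constructor
    · rintro ⟨i, hy⟩
      rcases eq_or_ne i j with rfl | hij
      · rw [Function.update_self, mem_insert_iff] at hy
        rcases hy with rfl | hy
        · exact Or.inl rfl
        · exact Or.inr ⟨i, hy⟩
      · rw [Function.update_of_ne hij] at hy
        exact Or.inr ⟨i, hy⟩
    · rintro (rfl | ⟨i, hy⟩)
      · exact ⟨j, by simp⟩
      · rcases eq_or_ne i j with rfl | hij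
        · exact ⟨i, by simp [hy]⟩
        · exact ⟨i, by simp [Function.update_of_ne hij, hy]⟩

/-- Replacing the `i₀`-th member by `insert e (T i₀) \ X`. -/
lemma base_family {T : Fin m → Set α} (hT : RainbowFamily M κ T) (i₀ : Fin m)
    {e : α} {X : Set α} (he : e ∉ ⋃ i, T i)
    (hWrb : RainbowIndep M κ (insert e (T i₀) \ X)) (hX : X ⊆ T i₀) :
    RainbowFamily M κ (Function.update T i₀ (insert e (T i₀) \ X)) ∧
      (⋃ i, Function.update T i₀ (insert e (T i₀) \ X) i) = insert e (⋃ i, T i) \ X := by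
  classical
  set W := insert e (T i₀) \ X with hW
  have heT : ∀ i, e ∉ T i := fun i h => he (mem_iUnion.2 ⟨i, h⟩)
  have hdisW : ∀ i, i ≠ i₀ → Disjoint W (T i) := by
    intro i hi
    refine Disjoint.mono_left diff_subset ?_
    rw [Set.disjoint_left]
    rintro y (rfl | hy) hy'
    · exact heT i hy'
    · exact Set.disjoint_left.1 (hT.2 (Ne.symm hi)) hy hy'
  refine ⟨⟨fun i => ?_, fun i i' hii' => ?_⟩, ?_⟩
  · rcases eq_or_ne i i₀ with rfl | hi
    · simpa using hWrb
    · simpa [Function.update_of_ne hi] using hT.1 i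
  · show Disjoint (Function.update T i₀ W i) (Function.update T i₀ W i')
    rcases eq_or_ne i i₀ with rfl | hi
    · rw [Function.update_self, Function.update_of_ne (Ne.symm hii')]
      exact hdisW i' (Ne.symm hii')
    · rcases eq_or_ne i' i₀ with rfl | hi'
      · rw [Function.update_of_ne hi, Function.update_self]
        exact (hdisW i hi).symm
      · rw [Function.update_of_ne hi, Function.update_of_ne hi']
        exact hT.2 hii'
  · ext y
    simp only [mem_iUnion, mem_diff, mem_insert_iff]
    constructor
    · rintro ⟨i, hy⟩
      rcases eq_or_ne i i₀ with rfl | hi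
      · rw [Function.update_self, hW, mem_diff, mem_insert_iff] at hy
        exact ⟨hy.1.imp id (fun h => ⟨i, h⟩), hy.2⟩
      · rw [Function.update_of_ne hi] at hy
        refine ⟨Or.inr ⟨i, hy⟩, fun hyX => ?_⟩
        exact Set.disjoint_left.1 (hT.2 hi) hy (hX hyX)
    · rintro ⟨(rfl | ⟨i, hy⟩), hyX⟩
      · exact ⟨i₀, by simp [hW, hyX, heT i₀]⟩
      · rcases eq_or_ne i i₀ with rfl | hi
        · exact ⟨i, by simp [hW, hy, hyX]⟩
        · exact ⟨i, by simp [Function.update_of_ne hi, hy]⟩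

end Aux

/-- If some member `T` of the 3-reduced family can be extended by an element `e` outside
`E(𝒯)` to a rainbow independent set, then `𝒯` is not maximum: there is a family of the
same number of pairwise-disjoint rainbow independent sets with strictly more elements. -/
theorem not_maximum_of_reduced_extension {α β : Type*} (M : Matroid α) [M.Finite]
    (κ : α → β) (hκ : IsColouring M κ) {m : ℕ} (T : Fin m → Set α)
    (hT : RainbowFamily M κ T)
    (i₀ : Fin m) (e : α) (he : e ∉ ⋃ i, T i)
    (hext : RainbowIndep M κ (insert e (reduceFam M κ 3 T i₀))) :
    ∃ S : Fin m → Set α, RainbowFamily M κ S ∧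
      (⋃ i, T i).ncard < (⋃ i, S i).ncard := by
  classical
  obtain ⟨hTind, hTdisj⟩ := id hT
  set U := ⋃ i, T i with hU
  have hground : ∀ i, T i ⊆ M.E := fun i => (hTind i).1.subset_ground
  have hUfin : U.Finite := M.ground_finite.subset (iUnion_subset hground)
  have hAfin : (T i₀).Finite := hUfin.subset (subset_iUnion T i₀)
  have heA : e ∉ T i₀ := fun h => he (mem_iUnion.2 ⟨i₀, h⟩)
  set A := T i₀ with hAdef
  set A' := reduceFam M κ 3 T i₀ with hA'def
  have hA'A : A' ⊆ A := fun x hx => hx.1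
  have hAE : A ⊆ M.E := hground i₀
  have heE : e ∈ M.E := hext.1.subset_ground (mem_insert _ _)
  have hXE : insert e A ⊆ M.E := insert_subset heE hAE
  obtain ⟨B, hB, hBsup⟩ := Matroid.Indep.subset_isBasis_of_subset hext.1 (insert_subset_insert hA'A) hXE
  obtain ⟨B₂, hB₂, hAB₂⟩ := Matroid.Indep.subset_isBasis_of_subset (hTind i₀).1 (subset_insert e A) hXE
  have heB : e ∈ B := hBsup (mem_insert _ _)
  have hBA : B ⊆ insert e A := hB.subset
  have hcard : A.encard ≤ B.encard := by
    rw [hB.encard_eq_encard hB₂]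
    exact encard_le_encard hAB₂
  -- the difference `A \ B` has at most one element
  have hdiff : (A \ B).encard ≤ 1 := by
    have h1 : B = insert e (A ∩ B) := by
      ext y
      constructor
      · intro hy
        rcases hBA hy with rfl | hyA
        · exact mem_insert _ _
        · exact mem_insert_of_mem _ ⟨hyA, hy⟩
      · rintro (rfl | ⟨_, hy⟩)
        · exact heB
        · exact hy
    have h2 : B.encard = (A ∩ B).encard + 1 := by
      conv_lhs => rw [h1]
      rw [encard_insert_of_notMem (fun h => heA h.1)]
    have h3 : (A \ B).encard + (A ∩ B).encard = A.encard := encard_diff_add_encard_inter A B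
    have hfin : (A ∩ B).encard ≠ ⊤ := by
      rw [encard_ne_top_iff]
      exact hAfin.inter_of_left B
    have h4 : (A \ B).encard + (A ∩ B).encard ≤ 1 + (A ∩ B).encard := by
      rw [h3, add_comm]
      exact hcard.trans h2.le
    exact (WithTop.add_le_add_iff_right hfin).1 h4
  -- the colour clash set has at most one element
  set Cc : Set α := {x ∈ A | κ x = κ e} with hCc
  have hCc1 : Cc.encard ≤ 1 := by
    rw [encard_le_one_iff]
    intro a b ha hb
    exact (hTind i₀).2 ha.1 hb.1 (ha.2.trans hb.2.symm)
  set X : Set α := (A \ B) ∪ Cc with hXdef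
  have hXA : X ⊆ A := union_subset diff_subset (fun x hx => hx.1)
  -- every element of X is outside A'
  have hXA' : ∀ x ∈ X, x ∉ A' := by
    rintro x (hx | hx) hx'
    · exact hx.2 (hBsup (mem_insert_of_mem _ hx'))
    · have : x ≠ e := fun h => heA (h ▸ hx.1)
      exact this (hext.2 (mem_insert_of_mem _ hx') (mem_insert _ _) hx.2)
  -- every element of X can be inserted in at least 3 other sets
  have hcand : ∀ x ∈ X, 3 ≤ {j : Fin m | x ∉ T j ∧ RainbowIndep M κ (insert x (T j))}.ncard := by
    intro x hx
    by_contra h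
    exact hXA' x hx ⟨hXA hx, by omega⟩
  have hcandne : ∀ x ∈ X, ∀ j, x ∉ T j → j ≠ i₀ := by
    intro x hx j hj hji
    exact hj (hji ▸ hXA hx)
  -- the replaced set is rainbow independent
  have hWrb : RainbowIndep M κ (insert e A \ X) := by
    constructor
    · refine hB.indep.subset ?_
      rintro y ⟨hy, hyX⟩
      rcases hy with rfl | hy
      · exact heB
      · by_contra hyB
        exact hyX (Or.inl ⟨hy, hyB⟩)
    · rintro y ⟨hy, hyX⟩ z ⟨hz, hzX⟩ hyz
      rcases hy with rfl | hy <;> rcases hz with rfl | hz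
      · rfl
      · exact absurd (Or.inr ⟨hz, hyz.symm⟩) hzX
      · exact absurd (Or.inr ⟨hy, hyz⟩) hyX
      · exact (hTind i₀).2 hy hz hyz
  obtain ⟨hS₁fam, hS₁U⟩ := base_family hT i₀ he hWrb hXA
  set W := insert e A \ X with hWdef
  set S₁ := Function.update T i₀ W with hS₁def
  have hXmem : ∀ x ∈ X, ∀ i, x ∉ S₁ i := by
    intro x hx i
    rcases eq_or_ne i i₀ with rfl | hi
    · rw [hS₁def, Function.update_self]
      exact fun h => h.2 hx
    · rw [hS₁def, Function.update_of_ne hi]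
      intro h
      exact Set.disjoint_left.1 (hTdisj hi) h (hXA hx)
  -- case analysis on the shape of X
  have hABcase : A \ B = ∅ ∨ ∃ a, A \ B = {a} := encard_le_one_iff_eq.1 hdiff
  have hCccase : Cc = ∅ ∨ ∃ a, Cc = {a} := encard_le_one_iff_eq.1 hCc1
  have hXcase : X = ∅ ∨ (∃ a, X = {a}) ∨ (∃ a b, a ≠ b ∧ X = {a, b}) := by
    rcases hABcase with h1 | ⟨a, h1⟩ <;> rcases hCccase with h2 | ⟨b, h2⟩
    · exact Or.inl (by rw [hXdef, h1, h2, union_empty])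
    · exact Or.inr (Or.inl ⟨b, by rw [hXdef, h1, h2, empty_union]⟩)
    · exact Or.inr (Or.inl ⟨a, by rw [hXdef, h1, h2, union_empty]⟩)
    · rcases eq_or_ne a b with rfl | hab
      · exact Or.inr (Or.inl ⟨a, by rw [hXdef, h1, h2, union_self]⟩)
      · exact Or.inr (Or.inr ⟨a, b, hab, by rw [hXdef, h1, h2, singleton_union]⟩)
  have hfinal : ∀ S : Fin m → Set α, RainbowFamily M κ S → (⋃ i, S i) = insert e U →
      ∃ S : Fin m → Set α, RainbowFamily M κ S ∧ U.ncard < (⋃ i, S i).ncard := by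
    intro S hS hSU
    refine ⟨S, hS, ?_⟩
    rw [hSU, ncard_insert_of_notMem he hUfin]
    omega
  rcases hXcase with hX0 | ⟨a, hX1⟩ | ⟨a, b, hab, hX2⟩
  · refine hfinal S₁ hS₁fam ?_
    rw [hS₁U, hX0, diff_empty]
  · -- X = {a}
    have haX : a ∈ X := hX1 ▸ rfl
    have haU : a ∈ U := mem_iUnion.2 ⟨i₀, hXA haX⟩
    obtain ⟨j₁, hj₁⟩ : {j : Fin m | a ∉ T j ∧ RainbowIndep M κ (insert a (T j))}.Nonempty := by
      apply nonempty_of_ncard_ne_zero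
      have := hcand a haX
      omega
    have hj₁i₀ : j₁ ≠ i₀ := hcandne a haX j₁ hj₁.1
    have hS₁j₁ : S₁ j₁ = T j₁ := Function.update_of_ne hj₁i₀ _ _
    obtain ⟨hS₂fam, hS₂U⟩ := update_rainbow hS₁fam j₁ a (hXmem a haX) (by rw [hS₁j₁]; exact hj₁.2)
    refine hfinal _ hS₂fam ?_
    rw [hS₂U, hS₁U, hX1, insert_diff_singleton, insert_comm,
      insert_eq_self.2 haU]
  · -- X = {a, b}, a ≠ b
    have haX : a ∈ X := hX2 ▸ mem_insert _ _
    have hbX : b ∈ X := hX2 ▸ mem_insert_of_mem _ rfl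
    have haU : a ∈ U := mem_iUnion.2 ⟨i₀, hXA haX⟩
    have hbU : b ∈ U := mem_iUnion.2 ⟨i₀, hXA hbX⟩
    obtain ⟨j₁, hj₁⟩ : {j : Fin m | a ∉ T j ∧ RainbowIndep M κ (insert a (T j))}.Nonempty := by
      apply nonempty_of_ncard_ne_zero
      have := hcand a haX
      omega
    have hj₁i₀ : j₁ ≠ i₀ := hcandne a haX j₁ hj₁.1
    obtain ⟨j₂, hj₂, hj₂j₁⟩ : ∃ j₂ ∈ {j : Fin m | b ∉ T j ∧ RainbowIndep M κ (insert b (T j))},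
        j₂ ≠ j₁ := by
      by_contra h
      push_neg at h
      have hsub : {j : Fin m | b ∉ T j ∧ RainbowIndep M κ (insert b (T j))} ⊆ {j₁} := h
      have := (ncard_le_ncard hsub (finite_singleton j₁)).trans_eq (ncard_singleton j₁)
      have := hcand b hbX
      omega
    have hj₂i₀ : j₂ ≠ i₀ := hcandne b hbX j₂ hj₂.1
    have hS₁j₁ : S₁ j₁ = T j₁ := Function.update_of_ne hj₁i₀ _ _
    obtain ⟨hS₂fam, hS₂U⟩ := update_rainbow hS₁fam j₁ a (hXmem a haX) (by rw [hS₁j₁]; exact hj₁.2)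
    set S₂ := Function.update S₁ j₁ (insert a (S₁ j₁)) with hS₂def
    have hS₂j₂ : S₂ j₂ = T j₂ := by
      rw [hS₂def, Function.update_of_ne hj₂j₁, hS₁def, Function.update_of_ne hj₂i₀]
    have hbS₂ : ∀ i, b ∉ S₂ i := by
      intro i
      rcases eq_or_ne i j₁ with rfl | hij₁
      · rw [hS₂def, Function.update_self, hS₁j₁]
        rintro (rfl | hbT)
        · exact hab rfl
        · exact Set.disjoint_left.1 (hTdisj hj₁i₀) hbT (hXA hbX)
      · rw [hS₂def, Function.update_of_ne hij₁]
        exact hXmem b hbX i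
    obtain ⟨hS₃fam, hS₃U⟩ := update_rainbow hS₂fam j₂ b hbS₂ (by rw [hS₂j₂]; exact hj₂.2)
    refine hfinal _ hS₃fam ?_
    rw [hS₃U, hS₂U, hS₁U, hX2]
    ext y
    simp only [mem_insert_iff, mem_diff, mem_insert_iff, mem_singleton_iff]
    constructor
    · rintro (rfl | rfl | ⟨h, _⟩)
      · exact Or.inr hbU
      · exact Or.inr haU
      · exact h
    · intro h
      by_cases hya : y = a
      · exact Or.inr (Or.inl hya)
      · by_cases hyb : y = b
        · exact Or.inl hyb
        · exact Or.inr (Or.inr ⟨h, fun hc => hc.elim hya hyb⟩)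
end

section
/- Switching lemma: let ℓ ≥ 9^r and let 𝒯 = {T₁,…,T_m}, 𝒮 = {S₁,…,S_m} be families of pairwise-disjoint rainbow independent sets in a coloured matroid M with Tᵢ ⊆ Sᵢ for all i. Suppose e ∉ E(𝒮) and T₀ ∪ {e} is a rainbow independent set for some T₀ ∈ 𝒯_ℓ^{(r)}. Then there is a family 𝒮* of pairwise-disjoint rainbow independent sets with E(𝒮*) = {e} ∪ (E(𝒮) \ X) for some X ⊆ E(𝒮) \ E(𝒯) with |X| ≤ 2^{r+1}. -/
open Set

section Aux

variable {α β : Type*} {M : Matroid α} {κ : α → β} {m : ℕ} {ℓ : ℕ} {T S : Fin m → Set α}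

lemma exchange_aux : ∀ (n : ℕ) (B C : Set α), M.Indep B → B.Finite → C ⊆ B →
    ∀ z, z ∉ B → M.Indep (insert z C) → B.ncard ≤ C.ncard + n →
    ∃ B₂, C ⊆ B₂ ∧ B₂ ⊆ B ∧ M.Indep (insert z B₂) ∧ (B \ B₂).ncard ≤ 1 := by
  intro n
  induction n with
  | zero =>
    intro B C hB hBfin hCB z hzB hzC hcard
    refine ⟨C, subset_rfl, hCB, hzC, ?_⟩
    have : (B \ C).ncard = B.ncard - C.ncard := ncard_diff hCB (hBfin.subset hCB)
    omega
  | succ n IH =>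
    intro B C hB hBfin hCB z hzB hzC hcard
    by_cases h : B.ncard ≤ C.ncard + 1
    · refine ⟨C, subset_rfl, hCB, hzC, ?_⟩
      have : (B \ C).ncard = B.ncard - C.ncard := ncard_diff hCB (hBfin.subset hCB)
      omega
    · push_neg at h
      have hCfin : C.Finite := hBfin.subset hCB
      have hlt : (insert z C).encard < B.encard := by
        have h1 : (insert z C).ncard ≤ C.ncard + 1 := ncard_insert_le _ _
        rw [← (hCfin.insert z).cast_ncard_eq, ← hBfin.cast_ncard_eq]
        exact_mod_cast lt_of_le_of_lt h1 h
      obtain ⟨x, hx, hxi⟩ := hzC.augment hB hlt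
      have hxB : x ∈ B := hx.1
      have hxC : x ∉ C := fun hc => hx.2 (mem_insert_of_mem _ hc)
      have hins : M.Indep (insert z (insert x C)) := by
        rwa [insert_comm] at hxi
      obtain ⟨B₂, h1, h2, h3, h4⟩ := IH B (insert x C) hB hBfin
        (insert_subset hxB hCB) z hzB hins (by
          have : (insert x C).ncard = C.ncard + 1 := ncard_insert_of_notMem hxC hCfin
          omega)
      exact ⟨B₂, (subset_insert _ _).trans h1, h2, h3, h4⟩

lemma exchange {A B : Set α} {z : α} (hB : M.Indep B) (hBfin : B.Finite) (hAB : A ⊆ B)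
    (hzB : z ∉ B) (hzA : M.Indep (insert z A)) :
    ∃ B₂, A ⊆ B₂ ∧ B₂ ⊆ B ∧ M.Indep (insert z B₂) ∧ (B \ B₂).ncard ≤ 1 :=
  exchange_aux B.ncard B A hB hBfin hAB z hzB hzA (by omega)

lemma reduceIter_succ (s : ℕ) :
    reduceIter M κ ℓ (s + 1) T = reduceFam M κ ℓ (reduceIter M κ ℓ s T) := by
  simp only [reduceIter, Function.iterate_succ_apply']

lemma reduceIter_subset : ∀ (s : ℕ) (i : Fin m), reduceIter M κ ℓ s T i ⊆ T i := by
  intro s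
  induction s with
  | zero => intro i; simp [reduceIter]
  | succ s IH =>
    intro i
    rw [reduceIter_succ]
    exact fun x hx => IH i hx.1

lemma drop_level : ∀ (s : ℕ) (i : Fin m) (x : α), x ∈ T i → x ∉ reduceIter M κ ℓ s T i →
    ∃ s' < s, ℓ ≤ {j | x ∉ reduceIter M κ ℓ s' T j ∧
      RainbowIndep M κ (insert x (reduceIter M κ ℓ s' T j))}.ncard := by
  intro s
  induction s with
  | zero => intro i x hx hx'; exact absurd hx hx'
  | succ s IH =>
    intro i x hx hx'
    by_cases hmem : x ∈ reduceIter M κ ℓ s T i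
    · refine ⟨s, lt_add_one s, ?_⟩
      rw [reduceIter_succ] at hx'
      by_contra hlt
      push_neg at hlt
      exact hx' ⟨hmem, hlt⟩
    · obtain ⟨s', hs', h⟩ := IH i x hx hmem
      exact ⟨s', hs'.trans (lt_add_one s), h⟩

lemma rainbow_update {U : Fin m → Set α} (hU : RainbowFamily M κ U) (j₀ : Fin m) {N : Set α}
    (hN : RainbowIndep M κ N) (hdisj : ∀ j, j ≠ j₀ → Disjoint N (U j)) :
    RainbowFamily M κ (Function.update U j₀ N) := by
  constructor
  · intro i
    rcases eq_or_ne i j₀ with rfl | hne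
    · simpa using hN
    · rw [Function.update_of_ne hne]; exact hU.1 i
  · intro i j hij
    rcases eq_or_ne i j₀ with rfl | hi
    · rw [Function.onFun, Function.update_self, Function.update_of_ne (Ne.symm hij)]
      exact hdisj j (Ne.symm hij)
    · rcases eq_or_ne j j₀ with rfl | hj
      · rw [Function.onFun, Function.update_self, Function.update_of_ne hi]
        exact (hdisj i hi).symm
      · rw [Function.onFun, Function.update_of_ne hi, Function.update_of_ne hj]
        exact hU.2 hij

lemma union_update {U : Fin m → Set α} (hU : Pairwise (Function.onFun Disjoint U))
    (j₀ : Fin m) {D : Set α} (hD : D ⊆ U j₀) (z : α) :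
    (⋃ j, Function.update U j₀ (insert z (U j₀ \ D)) j) = insert z ((⋃ j, U j) \ D) := by
  ext x
  simp only [mem_iUnion, mem_insert_iff, mem_diff]
  constructor
  · rintro ⟨j, hj⟩
    rcases eq_or_ne j j₀ with rfl | hne
    · rw [Function.update_self] at hj
      rcases hj with rfl | ⟨hx, hxD⟩
      · exact Or.inl rfl
      · exact Or.inr ⟨⟨j, hx⟩, hxD⟩
    · rw [Function.update_of_ne hne] at hj
      refine Or.inr ⟨⟨j, hj⟩, fun hxD => ?_⟩
      exact (hU hne).le_bot ⟨hj, hD hxD⟩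
  · rintro (rfl | ⟨⟨j, hj⟩, hxD⟩)
    · exact ⟨j₀, by rw [Function.update_self]; exact Or.inl rfl⟩
    · rcases eq_or_ne j j₀ with rfl | hne
      · exact ⟨j, by rw [Function.update_self]; exact Or.inr ⟨hj, hxD⟩⟩
      · exact ⟨j, by rw [Function.update_of_ne hne]; exact hj⟩

/-- The inductive statement: one element can be inserted at level `s`. -/
def InsProp (M : Matroid α) (κ : α → β) (ℓ : ℕ) (T S : Fin m → Set α) (s : ℕ) : Prop :=
  ∀ (U : Fin m → Set α) (G : Set (Fin m)) (z : α) (j₀ : Fin m),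
    RainbowFamily M κ U → (∀ j ∈ G, U j = S j) → j₀ ∈ G →
    z ∉ (⋃ j, U j) →
    RainbowIndep M κ (insert z (reduceIter M κ ℓ s T j₀)) →
    Gᶜ.ncard + 2 ^ (s + 1) ≤ ℓ + 1 →
    ∃ U' G' X, RainbowFamily M κ U' ∧ G' ⊆ G \ {j₀} ∧ (∀ j ∈ G', U' j = S j) ∧
      (G \ G').ncard ≤ 2 ^ (s + 1) - 1 ∧
      X ⊆ (⋃ j ∈ G, S j) \ (⋃ j, T j) ∧ X.ncard ≤ 2 ^ (s + 1) ∧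
      (⋃ j, U' j) = insert z ((⋃ j, U j) \ X)

end Aux

section Main

variable {α β : Type*} {M : Matroid α} {κ : α → β} {m : ℕ} {ℓ : ℕ} {T S : Fin m → Set α}

variable (hSfam : RainbowFamily M κ S) (hsub : ∀ i, T i ⊆ S i) (hMfin : M.E.Finite)

include hSfam hMfin

lemma proc (s : ℕ) (IH : ∀ s' < s, InsProp M κ ℓ T S s') (j₀ : Fin m) :
    ∀ (L : List α) (V : Fin m → Set α) (Gv : Set (Fin m)),
    RainbowFamily M κ V → (∀ j ∈ Gv, V j = S j) → j₀ ∉ Gv → L.Nodup →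
    (∀ d ∈ L, d ∉ ⋃ j, V j) → (∀ d ∈ L, d ∈ S j₀) →
    (∀ d ∈ L, (d ∉ ⋃ j, T j) ∨ ∃ s' < s, ℓ ≤ {j | d ∉ reduceIter M κ ℓ s' T j ∧
        RainbowIndep M κ (insert d (reduceIter M κ ℓ s' T j))}.ncard) →
    Gvᶜ.ncard + L.length * 2 ^ s ≤ ℓ + L.length →
    ∃ V' G' X, RainbowFamily M κ V' ∧ G' ⊆ Gv ∧ (∀ j ∈ G', V' j = S j) ∧
      (Gv \ G').ncard ≤ L.length * (2 ^ s - 1) ∧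
      X ⊆ ((⋃ j ∈ Gv, S j) ∪ {d | d ∈ L}) \ (⋃ j, T j) ∧
      X.ncard ≤ L.length * 2 ^ s ∧
      (⋃ j, V' j) = ((⋃ j, V j) ∪ {d | d ∈ L}) \ X := by
  intro L
  induction L with
  | nil =>
    intro V Gv hV hVS hj₀ _ _ _ _ _
    exact ⟨V, Gv, ∅, hV, subset_rfl, hVS, by simp, by simp, by simp, by simp⟩
  | cons d L' IHL =>
    intro V Gv hV hVS hj₀ hnodup hnotin hSj₀ hHd hbud
    have hp1 : 1 ≤ 2 ^ s := Nat.one_le_two_pow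
    have hdV : d ∉ ⋃ j, V j := hnotin d (List.mem_cons_self)
    have hdS : d ∈ S j₀ := hSj₀ d (List.mem_cons_self)
    have hdL' : d ∉ L' := (List.nodup_cons.mp hnodup).1
    have hnodup' : L'.Nodup := (List.nodup_cons.mp hnodup).2
    have hbud' : Gvᶜ.ncard + L'.length * 2 ^ s + 2 ^ s ≤ ℓ + L'.length + 1 := by
      have h1 : (d :: L').length * 2 ^ s = L'.length * 2 ^ s + 2 ^ s := by
        rw [List.length_cons, Nat.succ_mul]
      have h2 : (d :: L').length = L'.length + 1 := rfl
      omega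
    have hSj₀disj : ∀ w ∈ S j₀, ∀ j ∈ Gv, w ∉ S j := by
      intro w hw j hj hwj
      exact (hSfam.2 (show j ≠ j₀ from fun h => hj₀ (h ▸ hj))).le_bot ⟨hwj, hw⟩
    rcases hHd d (List.mem_cons_self) with hdT | ⟨s', hs', hcand⟩
    · -- discard `d` into `X`
      obtain ⟨V', G', X', h1, h2, h3, h4, h5, h6, h7⟩ := IHL V Gv hV hVS hj₀ hnodup'
        (fun d' hd' => hnotin d' (List.mem_cons_of_mem _ hd'))
        (fun d' hd' => hSj₀ d' (List.mem_cons_of_mem _ hd'))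
        (fun d' hd' => hHd d' (List.mem_cons_of_mem _ hd')) (by omega)
      have hX'fin : X'.Finite := by
        refine Set.Finite.subset ?_ (h5.trans diff_subset)
        exact Set.Finite.union (Set.Finite.biUnion (toFinite _)
          (fun j _ => hMfin.subset ((hSfam.1 j).1.subset_ground))) L'.finite_toSet
      refine ⟨V', G', insert d X', h1, h2, h3, ?_, ?_, ?_, ?_⟩
      · refine h4.trans ?_
        rw [List.length_cons, Nat.succ_mul]
        omega
      · intro x hx
        rcases hx with rfl | hx
        · exact ⟨Or.inr (by simp [List.mem_cons]), hdT⟩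
        · obtain ⟨hx1, hx2⟩ := h5 hx
          refine ⟨?_, hx2⟩
          rcases hx1 with hx1 | hx1
          · exact Or.inl hx1
          · exact Or.inr (by simp only [mem_setOf_eq, List.mem_cons]; right; exact hx1)
      · have := ncard_insert_le d X'
        rw [List.length_cons, Nat.succ_mul]
        omega
      · rw [h7]
        ext w
        simp only [mem_diff, mem_union, mem_setOf_eq, List.mem_cons, mem_insert_iff]
        constructor
        · rintro ⟨hw1, hw2⟩
          have hwd : w ≠ d := by
            rintro rfl
            rcases hw1 with hw1 | hw1
            · exact hdV hw1
            · exact hdL' hw1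
          refine ⟨?_, ?_⟩
          · rcases hw1 with hw1 | hw1
            · exact Or.inl hw1
            · exact Or.inr (Or.inr hw1)
          · rintro (rfl | hw)
            · exact hwd rfl
            · exact hw2 hw
        · rintro ⟨hw1, hw2⟩
          have hwd : w ≠ d := fun h => hw2 (Or.inl h)
          refine ⟨?_, fun h => hw2 (Or.inr h)⟩
          rcases hw1 with hw1 | rfl | hw1
          · exact Or.inl hw1
          · exact absurd rfl hwd
          · exact Or.inr hw1
    · -- reinsert `d` into some untouched component
      have hps' : 2 ^ (s' + 1) ≤ 2 ^ s := Nat.pow_le_pow_right (by norm_num) hs'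
      have hq1 : 1 ≤ 2 ^ (s' + 1) := Nat.one_le_two_pow
      have hp2 : 2 ≤ 2 ^ s := by
        calc (2 : ℕ) = 2 ^ 1 := rfl
        _ ≤ 2 ^ s := Nat.pow_le_pow_right (by norm_num) (by omega)
      have hmul2 : L'.length * 2 ≤ L'.length * 2 ^ s := Nat.mul_le_mul_left _ hp2
      obtain ⟨j, hjC, hjGv⟩ : ∃ j, j ∈ {j | d ∉ reduceIter M κ ℓ s' T j ∧
          RainbowIndep M κ (insert d (reduceIter M κ ℓ s' T j))} ∧ j ∈ Gv := by
        by_contra hcon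
        push_neg at hcon
        have hsub' : {j | d ∉ reduceIter M κ ℓ s' T j ∧
            RainbowIndep M κ (insert d (reduceIter M κ ℓ s' T j))} ⊆ Gvᶜ :=
          fun j hj => hcon j hj
        have := ncard_le_ncard hsub' (toFinite _)
        omega
      obtain ⟨V₂, G₂, X₂, k1, k2, k3, k4, k5, k6, k7⟩ :=
        IH s' hs' V Gv d j hV hVS hjGv hdV hjC.2 (by omega)
      have hX₂S : ∀ w ∈ S j₀, w ∉ X₂ := by
        intro w hw hwX
        obtain ⟨hw1, _⟩ := k5 hwX
        simp only [mem_iUnion, exists_prop] at hw1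
        obtain ⟨j', hj', hwj'⟩ := hw1
        exact hSj₀disj w hw j' hj' hwj'
      have hG₂c : G₂ᶜ.ncard ≤ Gvᶜ.ncard + (2 ^ (s' + 1) - 1) := by
        have hsub2 : G₂ᶜ ⊆ Gvᶜ ∪ (Gv \ G₂) := by
          intro x hx
          by_cases hxGv : x ∈ Gv
          · exact Or.inr ⟨hxGv, hx⟩
          · exact Or.inl hxGv
        calc G₂ᶜ.ncard ≤ (Gvᶜ ∪ (Gv \ G₂)).ncard := ncard_le_ncard hsub2 (toFinite _)
        _ ≤ Gvᶜ.ncard + (Gv \ G₂).ncard := ncard_union_le _ _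
        _ ≤ _ := by omega
      obtain ⟨V₃, G₃, X₃, n1, n2, n3, n4, n5, n6, n7⟩ := IHL V₂ G₂ k1 k3
        (fun h => hj₀ ((k2 h).1))
        hnodup'
        (by
          intro d' hd'
          rw [k7]
          rintro (h | h)
          · exact hdL' (h ▸ hd')
          · exact hnotin d' (List.mem_cons_of_mem _ hd') h.1)
        (fun d' hd' => hSj₀ d' (List.mem_cons_of_mem _ hd'))
        (fun d' hd' => hHd d' (List.mem_cons_of_mem _ hd'))
        (by omega)
      have hfinX : X₂.Finite ∧ X₃.Finite := by
        constructor
        · refine Set.Finite.subset ?_ (k5.trans diff_subset)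
          exact Set.Finite.biUnion (toFinite _)
            (fun j' _ => hMfin.subset ((hSfam.1 j').1.subset_ground))
        · refine Set.Finite.subset ?_ (n5.trans diff_subset)
          exact Set.Finite.union (Set.Finite.biUnion (toFinite _)
            (fun j' _ => hMfin.subset ((hSfam.1 j').1.subset_ground))) L'.finite_toSet
      refine ⟨V₃, G₃, X₂ ∪ X₃, n1, n2.trans ((k2.trans diff_subset)), n3, ?_, ?_, ?_, ?_⟩
      · -- touched indices bound
        have hsub3 : Gv \ G₃ ⊆ (Gv \ G₂) ∪ (G₂ \ G₃) := by
          intro x hx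
          by_cases hxG₂ : x ∈ G₂
          · exact Or.inr ⟨hxG₂, hx.2⟩
          · exact Or.inl ⟨hx.1, hxG₂⟩
        have h1 : (Gv \ G₃).ncard ≤ (Gv \ G₂).ncard + (G₂ \ G₃).ncard :=
          (ncard_le_ncard hsub3 (toFinite _)).trans (ncard_union_le _ _)
        have h2 : (d :: L').length * (2 ^ s - 1) = L'.length * (2 ^ s - 1) + (2 ^ s - 1) := by
          rw [List.length_cons, Nat.succ_mul]
        omega
      · -- X₂ ∪ X₃ in the right place
        intro x hx
        rcases hx with hx | hx
        · obtain ⟨hx1, hx2⟩ := k5 hx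
          exact ⟨Or.inl hx1, hx2⟩
        · obtain ⟨hx1, hx2⟩ := n5 hx
          refine ⟨?_, hx2⟩
          rcases hx1 with hx1 | hx1
          · refine Or.inl ?_
            simp only [mem_iUnion, exists_prop] at hx1 ⊢
            obtain ⟨j', hj', hxj'⟩ := hx1
            exact ⟨j', (k2 hj').1, hxj'⟩
          · exact Or.inr (by simp only [mem_setOf_eq, List.mem_cons]; right; exact hx1)
      · -- cardinality of X₂ ∪ X₃
        have h1 : (X₂ ∪ X₃).ncard ≤ X₂.ncard + X₃.ncard := ncard_union_le _ _
        have h2 : (d :: L').length * 2 ^ s = L'.length * 2 ^ s + 2 ^ s := by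
          rw [List.length_cons, Nat.succ_mul]
        omega
      · -- the union identity
        rw [n7, k7]
        ext w
        simp only [mem_diff, mem_union, mem_setOf_eq, List.mem_cons, mem_insert_iff]
        constructor
        · rintro ⟨hw1, hw3⟩
          rcases hw1 with (rfl | ⟨hwV, hwX₂⟩) | hwL'
          · exact ⟨Or.inr (Or.inl rfl), fun h => (h.elim (hX₂S _ hdS) hw3)⟩
          · exact ⟨Or.inl hwV, fun h => (h.elim hwX₂ hw3)⟩
          · refine ⟨Or.inr (Or.inr hwL'), fun h => ?_⟩
            rcases h with h | h
            · exact hX₂S w (hSj₀ w (List.mem_cons_of_mem _ hwL')) h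
            · exact hw3 h
        · rintro ⟨hw1, hw2⟩
          have hwX₂ : w ∉ X₂ := fun h => hw2 (Or.inl h)
          have hwX₃ : w ∉ X₃ := fun h => hw2 (Or.inr h)
          refine ⟨?_, hwX₃⟩
          rcases hw1 with hwV | rfl | hwL'
          · exact Or.inl (Or.inr ⟨hwV, hwX₂⟩)
          · exact Or.inl (Or.inl rfl)
          · exact Or.inr hwL'

include hsub

lemma ins : ∀ s : ℕ, InsProp M κ ℓ T S s := by
  intro s
  induction s using Nat.strong_induction_on with
  | _ s IH =>
  intro U G z j₀ hU hUS hj₀G hz hzA h6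
  have hp1 : 1 ≤ 2 ^ s := Nat.one_le_two_pow
  have hpsucc : 2 ^ (s + 1) = 2 * 2 ^ s := by rw [pow_succ]; ring
  set A := reduceIter M κ ℓ s T j₀ with hA
  have hAT : A ⊆ T j₀ := reduceIter_subset s j₀
  have hUj₀ : U j₀ = S j₀ := hUS j₀ hj₀G
  set B := S j₀ with hBdef
  have hBrb : RainbowIndep M κ B := hUj₀ ▸ hU.1 j₀
  have hAB : A ⊆ B := hAT.trans (hsub j₀)
  have hzB : z ∉ B := fun h => hz (mem_iUnion.mpr ⟨j₀, hUj₀ ▸ h⟩)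
  have hzA' : z ∉ A := fun h => hzB (hAB h)
  have hBfin : B.Finite := hMfin.subset hBrb.1.subset_ground
  set Bc := {x ∈ B | κ x = κ z} with hBcdef
  have hBcB : Bc ⊆ B := sep_subset _ _
  have hBcA : ∀ x ∈ A, x ∉ Bc := by
    intro x hx hxc
    have : x = z := hzA.2 (mem_insert_of_mem _ hx) (mem_insert _ _) hxc.2
    exact hzB (this ▸ hAB hx)
  have hBcsub : Bc.Subsingleton := by
    intro x hx y hy
    exact hBrb.2 hx.1 hy.1 (hx.2.trans hy.2.symm)
  have hB₁ : M.Indep (B \ Bc) := hBrb.1.subset diff_subset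
  have hAB₁ : A ⊆ B \ Bc := fun x hx => ⟨hAB hx, hBcA x hx⟩
  obtain ⟨B₂, hAB₂, hB₂B₁, hB₂ind, hB₂card⟩ :=
    exchange hB₁ (hBfin.subset diff_subset) hAB₁ (fun h => hzB h.1) hzA.1
  have hB₂B : B₂ ⊆ B := hB₂B₁.trans diff_subset
  set D := B \ B₂ with hDdef
  have hDB : D ⊆ B := diff_subset
  have hDA : ∀ x ∈ D, x ∉ A := fun x hx hxA => hx.2 (hAB₂ hxA)
  have hDsplit : D ⊆ Bc ∪ ((B \ Bc) \ B₂) := by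
    intro x hx
    by_cases hxc : x ∈ Bc
    · exact Or.inl hxc
    · exact Or.inr ⟨⟨hx.1, hxc⟩, hx.2⟩
  -- build a duplicate-free list enumerating D, of length at most 2
  have hBmsub : ((B \ Bc) \ B₂).Subsingleton := by
    intro x hx y hy
    exact (ncard_le_one_iff ((hBfin.subset diff_subset).subset diff_subset)).mp hB₂card hx hy
  obtain ⟨L, hLnodup, hLD, hLlen⟩ : ∃ L : List α, L.Nodup ∧ (∀ x, x ∈ L ↔ x ∈ D) ∧
      L.length ≤ 2 := by
    obtain hc | ⟨a, hc⟩ := hBcsub.eq_empty_or_singleton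
    · obtain hm | ⟨b, hm⟩ := hBmsub.eq_empty_or_singleton
      · refine ⟨[], List.nodup_nil, fun x => ?_, by simp⟩
        simp only [List.not_mem_nil, false_iff]
        intro hx
        rcases hDsplit hx with h | h
        · rw [hc] at h; exact h
        · rw [hm] at h; exact h
      · refine ⟨[b], List.nodup_singleton b, fun x => ?_, by simp⟩
        simp only [List.mem_singleton]
        constructor
        · rintro rfl
          have hb : x ∈ (B \ Bc) \ B₂ := by rw [hm]; exact rfl
          exact ⟨hb.1.1, hb.2⟩
        · intro hx
          rcases hDsplit hx with h | h
          · rw [hc] at h; exact absurd h (notMem_empty x)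
          · rw [hm] at h; exact h
    · obtain hm | ⟨b, hm⟩ := hBmsub.eq_empty_or_singleton
      · refine ⟨[a], List.nodup_singleton a, fun x => ?_, by simp⟩
        simp only [List.mem_singleton]
        constructor
        · rintro rfl
          have ha : x ∈ Bc := by rw [hc]; exact rfl
          refine ⟨hBcB ha, fun haB₂ => ?_⟩
          exact (hB₂B₁ haB₂).2 ha
        · intro hx
          rcases hDsplit hx with h | h
          · rw [hc] at h; exact h
          · rw [hm] at h; exact absurd h (notMem_empty x)
      · have hab : a ≠ b := by
          intro h
          have ha : a ∈ Bc := by rw [hc]; exact rfl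
          have hb : b ∈ (B \ Bc) \ B₂ := by rw [hm]; exact rfl
          exact hb.1.2 (h ▸ ha)
        refine ⟨[a, b], by simp [hab], fun x => ?_, by simp⟩
        simp only [List.mem_cons, List.mem_singleton, List.not_mem_nil, or_false]
        constructor
        · rintro (rfl | rfl)
          · have ha : x ∈ Bc := by rw [hc]; exact rfl
            exact ⟨hBcB ha, fun haB₂ => (hB₂B₁ haB₂).2 ha⟩
          · have hb : x ∈ (B \ Bc) \ B₂ := by rw [hm]; exact rfl
            exact ⟨hb.1.1, hb.2⟩
        · intro hx
          rcases hDsplit hx with h | h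
          · rw [hc] at h; exact Or.inl h
          · rw [hm] at h; exact Or.inr h
  have hB₂eq : B₂ = B \ D := (diff_diff_cancel_left hB₂B).symm
  set U₁ := Function.update U j₀ (insert z B₂) with hU₁def
  have hU₁fam : RainbowFamily M κ U₁ := by
    refine rainbow_update hU j₀ ⟨hB₂ind, ?_⟩ ?_
    · rw [Set.injOn_insert (fun h => hzB (hB₂B h))]
      refine ⟨hBrb.2.mono hB₂B, fun h => ?_⟩
      obtain ⟨w, hw, hweq⟩ := h
      exact (hB₂B₁ hw).2 ⟨hB₂B hw, hweq⟩
    · intro j hj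
      rw [disjoint_iff_inter_eq_empty]
      ext x
      simp only [mem_inter_iff, mem_insert_iff, mem_empty_iff_false, iff_false, not_and]
      rintro (rfl | hx)
      · exact fun h => hz (mem_iUnion.mpr ⟨j, h⟩)
      · intro hxj
        exact (hU.2 hj).le_bot ⟨hxj, hUj₀ ▸ hB₂B hx⟩
  have hUnion₁ : (⋃ j, U₁ j) = insert z ((⋃ j, U j) \ D) := by
    have : insert z B₂ = insert z (U j₀ \ D) := by
      rw [hUj₀, ← hB₂eq]
    rw [hU₁def, this]
    exact union_update hU.2 j₀ (hUj₀ ▸ hDB) z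
  -- apply `proc` to reinsert the removed elements
  obtain ⟨V', G', X, p1, p2, p3, p4, p5, p6, p7⟩ := proc hSfam hMfin s IH j₀ L U₁ (G \ {j₀})
    hU₁fam
    (fun j hj => by
      rw [hU₁def, Function.update_of_ne (fun h => hj.2 (by rw [h]; exact rfl))]
      exact hUS j hj.1)
    (fun h => h.2 rfl)
    hLnodup
    (by
      intro d hd
      rw [hUnion₁]
      rintro (rfl | hmem)
      · exact hz (mem_iUnion.mpr ⟨j₀, hUj₀ ▸ hDB ((hLD d).mp hd)⟩)
      · exact hmem.2 ((hLD d).mp hd))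
    (fun d hd => hDB ((hLD d).mp hd))
    (by
      intro d hd
      by_cases hdT : d ∈ ⋃ j, T j
      · right
        obtain ⟨j, hdj⟩ := mem_iUnion.mp hdT
        have hjj₀ : j = j₀ := by
          by_contra hne
          exact (hSfam.2 hne).le_bot ⟨hsub j hdj, hDB ((hLD d).mp hd)⟩
        subst hjj₀
        obtain ⟨s', hs', hcand⟩ := drop_level s j d hdj (hDA d ((hLD d).mp hd))
        exact ⟨s', hs', hcand⟩
      · exact Or.inl hdT)
    (by
      have hcompl : ((G \ {j₀})ᶜ).ncard ≤ Gᶜ.ncard + 1 := by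
        have : (G \ {j₀})ᶜ ⊆ Gᶜ ∪ {j₀} := by
          intro x hx
          by_cases hxG : x ∈ G
          · exact Or.inr (by_contra fun hne => hx ⟨hxG, hne⟩)
          · exact Or.inl hxG
        calc ((G \ {j₀})ᶜ).ncard ≤ (Gᶜ ∪ {j₀}).ncard := ncard_le_ncard this (toFinite _)
        _ ≤ Gᶜ.ncard + ({j₀} : Set (Fin m)).ncard := ncard_union_le _ _
        _ = Gᶜ.ncard + 1 := by rw [ncard_singleton]
      have hc3 : L.length = 0 ∨ L.length = 1 ∨ L.length = 2 := by omega
      rcases hc3 with h | h | h <;> rw [h] <;> omega)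
  -- assemble the final answer
  have hDU : D ⊆ ⋃ j, U j := fun x hx => mem_iUnion.mpr ⟨j₀, hUj₀ ▸ hDB hx⟩
  have hzX : z ∉ X := by
    intro hzX
    obtain ⟨h1, _⟩ := p5 hzX
    rcases h1 with h1 | h1
    · simp only [mem_iUnion, exists_prop] at h1
      obtain ⟨j, hj, hzj⟩ := h1
      exact hz (mem_iUnion.mpr ⟨j, (hUS j hj.1) ▸ hzj⟩)
    · exact hzB (hDB ((hLD z).mp h1))
  refine ⟨V', G', X, p1, p2, p3, ?_, ?_, ?_, ?_⟩
  · have hsub4 : G \ G' ⊆ {j₀} ∪ ((G \ {j₀}) \ G') := by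
      intro x hx
      by_cases hxj : x = j₀
      · exact Or.inl hxj
      · exact Or.inr ⟨⟨hx.1, hxj⟩, hx.2⟩
    have h1 : (G \ G').ncard ≤ 1 + ((G \ {j₀}) \ G').ncard := by
      calc (G \ G').ncard ≤ ({j₀} ∪ ((G \ {j₀}) \ G')).ncard :=
            ncard_le_ncard hsub4 (toFinite _)
      _ ≤ ({j₀} : Set (Fin m)).ncard + ((G \ {j₀}) \ G').ncard := ncard_union_le _ _
      _ = 1 + ((G \ {j₀}) \ G').ncard := by rw [ncard_singleton]
    have h2 : L.length * (2 ^ s - 1) ≤ 2 * (2 ^ s - 1) := Nat.mul_le_mul_right _ hLlen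
    omega
  · intro x hx
    obtain ⟨h1, h2⟩ := p5 hx
    refine ⟨?_, h2⟩
    rcases h1 with h1 | h1
    · simp only [mem_iUnion, exists_prop] at h1 ⊢
      obtain ⟨j, hj, hxj⟩ := h1
      exact ⟨j, hj.1, hxj⟩
    · simp only [mem_iUnion, exists_prop]
      exact ⟨j₀, hj₀G, hDB ((hLD x).mp h1)⟩
  · have h2 : L.length * 2 ^ s ≤ 2 * 2 ^ s := Nat.mul_le_mul_right _ hLlen
    omega
  · rw [p7, hUnion₁]
    ext w
    simp only [mem_diff, mem_union, mem_insert_iff, mem_setOf_eq]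
    constructor
    · rintro ⟨h1, h2⟩
      rcases h1 with (rfl | ⟨hwU, hwD⟩) | hwL
      · exact Or.inl rfl
      · exact Or.inr ⟨hwU, h2⟩
      · exact Or.inr ⟨hDU ((hLD w).mp hwL), h2⟩
    · rintro (rfl | ⟨hwU, hwX⟩)
      · exact ⟨Or.inl (Or.inl rfl), hzX⟩
      · by_cases hwD : w ∈ D
        · exact ⟨Or.inr ((hLD w).mpr hwD), hwX⟩
        · exact ⟨Or.inl (Or.inr ⟨hwU, hwD⟩), hwX⟩

end Main

lemma two_pow_le_nine_pow : ∀ r : ℕ, 2 ^ (r + 1) ≤ 9 ^ r + 1 := by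
  intro r
  induction r with
  | zero => norm_num
  | succ r IH =>
    have h9 : (9 : ℕ) ^ (r + 1) = 9 * 9 ^ r := by rw [pow_succ]; ring
    have h2 : (2 : ℕ) ^ (r + 2) = 2 * 2 ^ (r + 1) := by rw [pow_succ]; ring
    have h1 : 1 ≤ (9 : ℕ) ^ r := Nat.one_le_pow _ _ (by norm_num)
    omega

/-- **Switching lemma.** Let `ℓ ≥ 9^r`, and let `𝒯 ⊆ 𝒮` (componentwise) be families of
pairwise-disjoint rainbow independent sets. If `e ∉ E(𝒮)` extends some member of
`𝒯_ℓ^{(r)}` to a rainbow independent set, then there is a family `𝒮*` of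
pairwise-disjoint rainbow independent sets with `E(𝒮*) = {e} ∪ (E(𝒮) \ X)` for some
`X ⊆ E(𝒮) \ E(𝒯)` with `|X| ≤ 2^{r+1}`. -/
theorem switching_lemma {α β : Type*} (M : Matroid α) [M.Finite]
    (κ : α → β) (hκ : IsColouring M κ) {m : ℕ} (r ℓ : ℕ) (hℓ : 9 ^ r ≤ ℓ)
    (T S : Fin m → Set α)
    (hT : RainbowFamily M κ T) (hS : RainbowFamily M κ S)
    (hsub : ∀ i, T i ⊆ S i)
    (e : α) (he : e ∉ ⋃ i, S i) (i₀ : Fin m)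
    (hext : RainbowIndep M κ (insert e (reduceIter M κ ℓ r T i₀))) :
    ∃ Sstar : Fin m → Set α, RainbowFamily M κ Sstar ∧
      ∃ X ⊆ (⋃ i, S i) \ (⋃ i, T i), X.ncard ≤ 2 ^ (r + 1) ∧
        (⋃ i, Sstar i) = insert e ((⋃ i, S i) \ X) := by
  have hMfin : M.E.Finite := M.ground_finite
  have hbud : ((Set.univ : Set (Fin m))ᶜ).ncard + 2 ^ (r + 1) ≤ ℓ + 1 := by
    rw [compl_univ, ncard_empty]
    have := two_pow_le_nine_pow r
    omega
  obtain ⟨U', G', X, q1, q2, q3, q4, q5, q6, q7⟩ :=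
    ins hS hsub hMfin r S Set.univ e i₀ hS (fun j _ => rfl) (mem_univ i₀) he hext hbud
  refine ⟨U', q1, X, ?_, q6, q7⟩
  intro x hx
  obtain ⟨h1, h2⟩ := q5 hx
  refine ⟨?_, h2⟩
  simp only [mem_iUnion, exists_prop] at h1 ⊢
  obtain ⟨j, _, hxj⟩ := h1
  exact ⟨j, hxj⟩
end

section
/- Increment lemma: let 𝒯 be a family of at most n pairwise-disjoint rainbow independent sets in a coloured matroid M having n colours each of size ≥ n, and let c be a colour. Then either (i) some Tᵢ ∈ 𝒯 admits at least d_{A(𝒯)}(c) + ½·k-ex_{A(𝒯)}(c) many colour-c elements e ∉ E(𝒯) with Tᵢ ∪ {e} a rainbow independent set, or (ii) the ℓ-reduced family satisfies e_{𝒯'_ℓ}(c) ≤ e_𝒯(c) − ½·k-ex_{A(𝒯)}(c) + ℓn/k. -/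
open Set

open scoped Classical

/-- Degree of a colour `c` in the availability graph `A(𝒯)`: the number of members
of the family missing colour `c`. -/
noncomputable def colourDeg {α β : Type*} (κ : α → β) {m : ℕ} (T : Fin m → Set α)
    (c : β) : ℕ :=
  {i : Fin m | c ∉ κ '' T i}.ncard

/-- Degree of a member `T i` in the availability graph `A(𝒯)`: the number of colours
missing from `T i`. -/
noncomputable def memberDeg {α β : Type*} [Fintype β] (κ : α → β) {m : ℕ}
    (T : Fin m → Set α) (i : Fin m) : ℕ :=
  {b : β | b ∉ κ '' T i}.ncard

/-- The `k`-excess of a colour `c` in the availability graph `A(𝒯)`: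
`max (0, d(x_k) − d(c))` where `x_k` is the `k`-th largest-degree neighbour of `c`
(`0` if `c` has fewer than `k` neighbours; truncated subtraction). -/
noncomputable def colourKExcess {α β : Type*} [Fintype β] (κ : α → β) {m : ℕ}
    (T : Fin m → Set α) (k : ℕ) (c : β) : ℕ :=
  kthLargest ((Finset.univ.filter (fun i : Fin m => c ∉ κ '' T i)).val.map
    (memberDeg κ T)) k - colourDeg κ T c

lemma augment_count {α : Type*} (M : Matroid α) [M.Finite] {I J : Set α}
    (hI : M.Indep I) (hJ : M.Indep J) :
    J.ncard ≤ I.ncard + {e ∈ J | M.Indep (insert e I)}.ncard := by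
  obtain ⟨B, hB, hIB⟩ := hI.subset_isBasis_of_subset (subset_union_left (t := J))
    (union_subset hI.subset_ground hJ.subset_ground)
  obtain ⟨B', hB', hJB'⟩ := hJ.subset_isBasis_of_subset (subset_union_right (s := I))
    (union_subset hI.subset_ground hJ.subset_ground)
  have hBfin : B.Finite := M.ground_finite.subset hB.indep.subset_ground
  have hB'fin : B'.Finite := M.ground_finite.subset hB'.indep.subset_ground
  have hJB : J.ncard ≤ B.ncard := by
    have := hB.encard_eq_encard hB'
    have h1 : J.ncard ≤ B'.ncard := Set.ncard_le_ncard hJB' hB'fin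
    have h2 : B'.ncard = B.ncard := by
      rw [Set.ncard_def, Set.ncard_def, this]
    omega
  have hsub : B \ I ⊆ {e ∈ J | M.Indep (insert e I)} := by
    intro e he
    refine ⟨(hB.subset he.1).resolve_left he.2, hB.indep.subset ?_⟩
    exact insert_subset he.1 hIB
  have h3 : (B \ I).ncard ≤ {e ∈ J | M.Indep (insert e I)}.ncard :=
    Set.ncard_le_ncard hsub (M.ground_finite.subset
      (fun e he => hJ.subset_ground he.1))
  have h4 : B.ncard ≤ I.ncard + (B \ I).ncard := by
    have := Set.ncard_diff_add_ncard_of_subset hIB hBfin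
    omega
  omega

lemma kthLargest_count (s : Multiset ℕ) (k : ℕ) (hk : 0 < k)
    (hL : 0 < kthLargest s k) :
    k ≤ (s.filter (fun x => kthLargest s k ≤ x)).card := by
  classical
  set L := kthLargest s k with hLdef
  set l := s.sort (· ≤ ·) with hl
  set len := l.length with hlen
  have hsorted : l.Pairwise (· ≤ ·) := Multiset.pairwise_sort s _
  by_cases hklen : len < k
  · exfalso
    have : l.reverse.getD (k - 1) 0 = 0 :=
      List.getD_eq_default _ _ (by simp only [List.length_reverse, ← hlen]; omega)
    rw [hLdef] at hL; unfold kthLargest at hL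
    rw [← hl, this] at hL; omega
  push_neg at hklen
  have hk1 : k - 1 < l.reverse.length := by simp; omega
  have hLeq : L = l[len - k]'(by omega) := by
    rw [hLdef]; unfold kthLargest
    rw [← hl, List.getD_eq_getElem _ _ hk1, List.getElem_reverse]
    congr 1
    simp only [← hlen]
    omega
  have hdroplen : (l.drop (len - k)).length = k := by simp [← hlen]; omega
  have hall : ∀ x ∈ l.drop (len - k), decide (L ≤ x) = true := by
    intro x hx
    obtain ⟨i, hi, rfl⟩ := List.getElem_of_mem hx
    rw [List.getElem_drop]
    simp only [decide_eq_true_eq, hLeq]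
    exact hsorted.rel_get_of_le (a := ⟨len - k, by omega⟩)
      (b := ⟨len - k + i, by rw [hdroplen] at hi; omega⟩) (by simp)
  have hcount : k ≤ l.countP (fun x => decide (L ≤ x)) := by
    have h0 := List.countP_eq_length.2 hall
    calc k = (l.drop (len - k)).countP (fun x => decide (L ≤ x)) := by
              rw [h0, hdroplen]
      _ ≤ l.countP _ := by
          conv_rhs => rw [← List.take_append_drop (len - k) l]
          rw [List.countP_append]; omega
  have : (s.filter (fun x => L ≤ x)).card = l.countP (fun x => decide (L ≤ x)) := by
    rw [← Multiset.countP_eq_card_filter, ← Multiset.sort_eq s (· ≤ ·), ← hl,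
      Multiset.coe_countP]
  omega


/-- **Increment lemma.** For a family `𝒯` of at most `n` pairwise-disjoint rainbow
independent sets in a coloured matroid with `n` colours each of size `≥ n`, and any
colour `c`, either some `Tᵢ` admits at least `d_{A(𝒯)}(c) + ½·k-ex_{A(𝒯)}(c)` many
colour-`c` elements outside `E(𝒯)` extending it to a rainbow independent set, or the
`ℓ`-reduced family satisfies `e_{𝒯'_ℓ}(c) ≤ e_𝒯(c) − ½·k-ex_{A(𝒯)}(c) + ℓn/k`. -/
theorem increment_lemma {α β : Type*} [Fintype β] (M : Matroid α) [M.Finite]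
    (κ : α → β) (hκ : IsColouring M κ) (n : ℕ) (hn : Fintype.card β = n)
    (hsize : ∀ b : β, n ≤ {x ∈ M.E | κ x = b}.ncard)
    {m : ℕ} (hm : m ≤ n) (T : Fin m → Set α) (hT : RainbowFamily M κ T)
    (k ℓ : ℕ) (hk : 0 < k) (c : β) :
    (∃ i : Fin m,
        (colourDeg κ T c : ℝ) + (colourKExcess κ T k c : ℝ) / 2 ≤
          ({e | e ∈ M.E ∧ κ e = c ∧ e ∉ (⋃ j, T j) ∧
            RainbowIndep M κ (insert e (T i))}.ncard : ℝ)) ∨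
      (({x ∈ ⋃ i, reduceFam M κ ℓ T i | κ x = c}.ncard : ℝ) ≤
        ({x ∈ ⋃ i, T i | κ x = c}.ncard : ℝ) - (colourKExcess κ T k c : ℝ) / 2
          + (ℓ : ℝ) * (n : ℝ) / (k : ℝ)) := by
  classical
  obtain ⟨hTind, hTdisj⟩ := hT
  have hE : M.E.Finite := M.ground_finite
  set d := colourDeg κ T c with hd
  set ex := colourKExcess κ T k c with hexdef
  set F : Set α := {x ∈ ⋃ i, T i | κ x = c} with hFdef
  have hFsub : F ⊆ M.E := by
    intro x hx
    obtain ⟨i, hi⟩ := mem_iUnion.1 hx.1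
    exact (hTind i).1.subset_ground hi
  have hFfin : F.Finite := hE.subset hFsub
  set FF : Finset α := hFfin.toFinset with hFF
  have hFcard : F.ncard = FF.card := Set.ncard_eq_toFinset_card _ hFfin
  have hredsubF : {x ∈ ⋃ i, reduceFam M κ ℓ T i | κ x = c} ⊆ F := by
    intro x hx
    obtain ⟨i, hi⟩ := mem_iUnion.1 hx.1
    exact ⟨mem_iUnion.2 ⟨i, hi.1⟩, hx.2⟩
  by_cases hex0 : ex = 0
  · right
    rw [hex0]
    have h1 : {x ∈ ⋃ i, reduceFam M κ ℓ T i | κ x = c}.ncard ≤ F.ncard :=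
      Set.ncard_le_ncard hredsubF hFfin
    have h2 : (0:ℝ) ≤ (ℓ:ℝ) * (n:ℝ) / (k:ℝ) := by positivity
    have h1' : ({x ∈ ⋃ i, reduceFam M κ ℓ T i | κ x = c}.ncard : ℝ) ≤
        (F.ncard : ℝ) := by exact_mod_cast h1
    push_cast
    linarith
  by_cases hcase : (∃ i : Fin m,
        (colourDeg κ T c : ℝ) + (colourKExcess κ T k c : ℝ) / 2 ≤
          ({e | e ∈ M.E ∧ κ e = c ∧ e ∉ (⋃ j, T j) ∧
            RainbowIndep M κ (insert e (T i))}.ncard : ℝ))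
  · exact Or.inl hcase
  right
  push_neg at hcase
  -- setup: N, L, S
  set N : Finset (Fin m) := Finset.univ.filter (fun i : Fin m => c ∉ κ '' T i)
    with hN
  set L : ℕ := kthLargest (N.val.map (memberDeg κ T)) k with hL
  have hexL : ex = L - d := rfl
  have hLpos : 0 < L := by omega
  have hLdex : L = d + ex := by omega
  have hcountk := kthLargest_count (N.val.map (memberDeg κ T)) k hk (by rw [← hL]; exact hLpos)
  have hNk : k ≤ (N.filter (fun j => L ≤ memberDeg κ T j)).card := by
    rw [← hL] at hcountk
    rwa [Multiset.filter_map, Multiset.card_map] at hcountk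
  obtain ⟨S, hSsub, hScard⟩ := Finset.exists_subset_card_eq hNk
  have hSN : ∀ j ∈ S, c ∉ κ '' T j ∧ L ≤ memberDeg κ T j := by
    intro j hj
    have := hSsub hj
    simp only [hN, Finset.mem_filter, Finset.mem_univ, true_and] at this
    exact ⟨this.1, this.2⟩
  have hmemdeg : ∀ j : Fin m, (T j).ncard + memberDeg κ T j = n := by
    intro j
    have h1 : (κ '' T j).ncard = (T j).ncard := Set.ncard_image_of_injOn (hTind j).2
    have h2 := Set.ncard_add_ncard_compl (κ '' T j) (Set.toFinite _) (Set.toFinite _)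
    have h3 : memberDeg κ T j = (κ '' T j)ᶜ.ncard := rfl
    rw [Nat.card_eq_fintype_card, hn] at h2
    omega
  -- key estimate per j ∈ S
  have hkey : ∀ j ∈ S, ((ex:ℝ)/2) <
      ((FF.filter (fun e => e ∉ T j ∧ RainbowIndep M κ (insert e (T j)))).card : ℝ) := by
    intro j hj
    obtain ⟨hcN, hLj⟩ := hSN j hj
    set Cc : Set α := {x ∈ M.E | κ x = c} with hCc
    set Ext : Set α := {e ∈ Cc | M.Indep (insert e (T j))} with hExt
    have hExtsub : Ext ⊆ M.E := fun e he => he.1.1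
    have hExtfin : Ext.Finite := hE.subset hExtsub
    have haug : Cc.ncard ≤ (T j).ncard + Ext.ncard :=
      augment_count M (hTind j).1 (hκ c)
    have hCcn : n ≤ Cc.ncard := hsize c
    have hExtL : L ≤ Ext.ncard := by
      have := hmemdeg j
      omega
    have hrb : ∀ e ∈ Ext, e ∉ T j ∧ RainbowIndep M κ (insert e (T j)) := by
      intro e he
      have hec : κ e = c := he.1.2
      have heT : e ∉ T j := fun h => hcN ⟨e, h, hec⟩
      refine ⟨heT, he.2, ?_⟩
      intro x hx y hy hxy
      rcases hx with rfl | hx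
      · rcases hy with rfl | hy
        · rfl
        · exact absurd (⟨y, hy, (hxy.symm.trans hec)⟩ : c ∈ κ '' T j) hcN
      · rcases hy with rfl | hy
        · exact absurd (⟨x, hx, (hxy.trans hec)⟩ : c ∈ κ '' T j) hcN
        · exact (hTind j).2 hx hy hxy
    have hsplit : (Ext ∩ (⋃ i, T i)).ncard + (Ext \ (⋃ i, T i)).ncard = Ext.ncard :=
      Set.ncard_inter_add_ncard_diff_eq_ncard Ext _ hExtfin
    -- outside part
    have hout : (Ext \ (⋃ i, T i)).ncard ≤
        ({e | e ∈ M.E ∧ κ e = c ∧ e ∉ (⋃ j', T j') ∧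
          RainbowIndep M κ (insert e (T j))}).ncard := by
      refine Set.ncard_le_ncard ?_ (hE.subset (fun e he => he.1))
      intro e he
      exact ⟨he.1.1.1, he.1.1.2, he.2, (hrb e he.1).2⟩
    have houtlt := hcase j
    -- inside part
    have hin : (Ext ∩ (⋃ i, T i)).ncard ≤
        (FF.filter (fun e => e ∉ T j ∧ RainbowIndep M κ (insert e (T j)))).card := by
      rw [← Set.ncard_coe_finset]
      refine Set.ncard_le_ncard ?_ (Finset.finite_toSet _)
      intro e he
      simp only [Finset.coe_filter, Set.mem_setOf_eq, hFF, Set.Finite.mem_toFinset]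
      exact ⟨⟨he.2, he.1.1.2⟩, hrb e he.1⟩
    have hd_eq : (d:ℝ) + (ex:ℝ)/2 >
        (({e | e ∈ M.E ∧ κ e = c ∧ e ∉ (⋃ j', T j') ∧
          RainbowIndep M κ (insert e (T j))}).ncard : ℝ) := houtlt
    have c1 : ((Ext \ (⋃ i, T i)).ncard : ℝ) < (d:ℝ) + (ex:ℝ)/2 := by
      calc ((Ext \ (⋃ i, T i)).ncard : ℝ) ≤ _ := by exact_mod_cast hout
        _ < (d:ℝ) + (ex:ℝ)/2 := hd_eq
    have c2 : ((Ext ∩ (⋃ i, T i)).ncard : ℝ) ≤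
        ((FF.filter (fun e => e ∉ T j ∧ RainbowIndep M κ (insert e (T j)))).card : ℝ) := by
      exact_mod_cast hin
    have c3 : (L:ℝ) ≤ ((Ext ∩ (⋃ i, T i)).ncard : ℝ) + ((Ext \ (⋃ i, T i)).ncard : ℝ) := by
      have : (L:ℝ) ≤ (Ext.ncard : ℝ) := by exact_mod_cast hExtL
      rw [← hsplit] at this
      push_cast at this
      linarith
    have c4 : (L:ℝ) = (d:ℝ) + (ex:ℝ) := by exact_mod_cast hLdex
    linarith
  -- double counting
  set P : ℕ := ∑ j ∈ S, (FF.filter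
    (fun e => e ∉ T j ∧ RainbowIndep M κ (insert e (T j)))).card with hP
  have hSne : S.Nonempty := Finset.card_pos.1 (by omega)
  have hPlow : (k:ℝ) * ((ex:ℝ)/2) < (P:ℝ) := by
    have h1 := Finset.sum_lt_sum_of_nonempty hSne hkey
    have h2 : ∑ _j ∈ S, ((ex:ℝ)/2) = (k:ℝ) * ((ex:ℝ)/2) := by
      rw [Finset.sum_const, hScard, nsmul_eq_mul]
    rw [h2] at h1
    calc (k:ℝ) * ((ex:ℝ)/2) < _ := h1
      _ = (P:ℝ) := by rw [hP, Nat.cast_sum]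
  set Del : Finset α := FF.filter (fun e =>
    ℓ ≤ {j : Fin m | e ∉ T j ∧ RainbowIndep M κ (insert e (T j))}.ncard) with hDel
  have hDelsubFF : Del ⊆ FF := Finset.filter_subset _ _
  -- swap the double sum
  have hswap : P = ∑ e ∈ FF, (S.filter
      (fun j => e ∉ T j ∧ RainbowIndep M κ (insert e (T j)))).card := by
    rw [hP]
    simp only [Finset.card_filter]
    rw [Finset.sum_comm]
  have hup : ∀ e ∈ FF, (S.filter
      (fun j => e ∉ T j ∧ RainbowIndep M κ (insert e (T j)))).card ≤
      (if e ∈ Del then k else 0) + ℓ := by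
    intro e he
    by_cases hdel : e ∈ Del
    · simp only [hdel, if_true]
      have := Finset.card_filter_le S (fun j => e ∉ T j ∧ RainbowIndep M κ (insert e (T j)))
      omega
    · simp only [hdel, if_false, zero_add]
      have hlt : {j : Fin m | e ∉ T j ∧ RainbowIndep M κ (insert e (T j))}.ncard < ℓ := by
        by_contra hge
        exact hdel (Finset.mem_filter.2 ⟨he, by omega⟩)
      have h1 : (S.filter (fun j => e ∉ T j ∧ RainbowIndep M κ (insert e (T j)))).card ≤
          (Finset.univ.filter (fun j => e ∉ T j ∧ RainbowIndep M κ (insert e (T j)))).card :=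
        Finset.card_le_card (Finset.filter_subset_filter _ (Finset.subset_univ S))
      have h2 : (Finset.univ.filter
          (fun j => e ∉ T j ∧ RainbowIndep M κ (insert e (T j)))).card =
          {j : Fin m | e ∉ T j ∧ RainbowIndep M κ (insert e (T j))}.ncard := by
        rw [Set.ncard_eq_toFinset_card']
        congr 1
        ext j
        simp
      omega
  have hPup : P ≤ k * Del.card + ℓ * FF.card := by
    rw [hswap]
    calc ∑ e ∈ FF, (S.filter
        (fun j => e ∉ T j ∧ RainbowIndep M κ (insert e (T j)))).card
        ≤ ∑ e ∈ FF, ((if e ∈ Del then k else 0) + ℓ) := Finset.sum_le_sum hup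
      _ = (∑ e ∈ FF, (if e ∈ Del then k else 0)) + ℓ * FF.card := by
          rw [Finset.sum_add_distrib, Finset.sum_const, smul_eq_mul, mul_comm]
      _ = k * Del.card + ℓ * FF.card := by
          rw [Finset.sum_ite_mem, (Finset.inter_eq_right).2 hDelsubFF,
            Finset.sum_const, smul_eq_mul, mul_comm]
  have hFm : FF.card ≤ m := by
    rcases Finset.eq_empty_or_nonempty FF with h | ⟨x0, hx0⟩
    · simp [h]
    have hx0' : x0 ∈ F := (Set.Finite.mem_toFinset _).1 hx0
    obtain ⟨i0, hi0⟩ := mem_iUnion.1 hx0'.1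
    have hinj : Set.InjOn (fun x => if h : ∃ i, x ∈ T i then h.choose else i0)
        (FF : Set α) := by
      intro a ha b hb hab
      have haF : a ∈ F := (Set.Finite.mem_toFinset _).1 (Finset.mem_coe.1 ha)
      have hbF : b ∈ F := (Set.Finite.mem_toFinset _).1 (Finset.mem_coe.1 hb)
      have hea : ∃ i, a ∈ T i := mem_iUnion.1 haF.1
      have heb : ∃ i, b ∈ T i := mem_iUnion.1 hbF.1
      simp only [dif_pos hea, dif_pos heb] at hab
      have h1 : a ∈ T hea.choose := hea.choose_spec
      have h2 : b ∈ T hea.choose := by rw [hab]; exact heb.choose_spec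
      exact (hTind hea.choose).2 h1 h2 (haF.2.trans hbF.2.symm)
    have := Finset.card_le_card_of_injOn _ (fun a _ => Finset.mem_univ _) hinj
    simpa using this
  have hredsub2 : {x ∈ ⋃ i, reduceFam M κ ℓ T i | κ x = c} ⊆ ↑(FF \ Del) := by
    intro x hx
    obtain ⟨i, hi⟩ := mem_iUnion.1 hx.1
    have hxT : x ∈ T i := hi.1
    have hcnt : {j : Fin m | x ∉ T j ∧ RainbowIndep M κ (insert x (T j))}.ncard < ℓ :=
      hi.2
    have hxFF : x ∈ FF := by
      rw [hFF, Set.Finite.mem_toFinset]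
      exact ⟨mem_iUnion.2 ⟨i, hxT⟩, hx.2⟩
    simp only [Finset.coe_sdiff, Set.mem_diff, Finset.mem_coe]
    refine ⟨hxFF, fun hxDel => ?_⟩
    rw [hDel, Finset.mem_filter] at hxDel
    omega
  have hredle : {x ∈ ⋃ i, reduceFam M κ ℓ T i | κ x = c}.ncard ≤ FF.card - Del.card := by
    calc {x ∈ ⋃ i, reduceFam M κ ℓ T i | κ x = c}.ncard
        ≤ (↑(FF \ Del) : Set α).ncard :=
          Set.ncard_le_ncard hredsub2 (Finset.finite_toSet _)
      _ = (FF \ Del).card := Set.ncard_coe_finset _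
      _ = FF.card - Del.card := Finset.card_sdiff_of_subset hDelsubFF
  have hDle : Del.card ≤ FF.card := Finset.card_le_card hDelsubFF
  have hk' : (0:ℝ) < (k:ℝ) := by exact_mod_cast hk
  have hPup' : (P:ℝ) ≤ (k:ℝ) * (Del.card:ℝ) + (ℓ:ℝ) * (n:ℝ) := by
    have hFmn : FF.card ≤ n := le_trans hFm hm
    have h1 : P ≤ k * Del.card + ℓ * n := le_trans hPup (by
      have := Nat.mul_le_mul_left ℓ hFmn; omega)
    exact_mod_cast h1
  have hmain : (ex:ℝ)/2 - (Del.card:ℝ) < (ℓ:ℝ) * (n:ℝ) / (k:ℝ) := by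
    rw [lt_div_iff₀ hk']
    nlinarith [hPlow, hPup']
  have hr : ({x ∈ ⋃ i, reduceFam M κ ℓ T i | κ x = c}.ncard : ℝ) ≤
      (FF.card:ℝ) - (Del.card:ℝ) := by
    rw [← Nat.cast_sub hDle]
    exact_mod_cast hredle
  have hFcard' : (F.ncard : ℝ) = (FF.card : ℝ) := by exact_mod_cast hFcard
  linarith
end
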